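/- arXiv:1212.4735 — 8 statements merged into one kernel-verified Lean document; each statement's English description precedes it below -/
import Mathlib

section
/- Let p be a prime and k a perfect field of characteristic p. An element f of the Laurent series field k((t)) lies, for every natural number n, in the image of the n-th iterate of the Frobenius endomorphism g ↦ g^p of k((t)) if and only if f belongs to k (identified with the subfield of constant Laurent series). Equivalently, ⋂_{n≥0} { g^{p^n} : g ∈ k((t)) } = k. -/
open HahnSeries

section Aux

variable {p : ℕ} {k : Type*} [Field k] [CharP k p] [ExpChar k p]

/-- multiplication by `p` as an order embedding of `ℤ`. -/
noncomputable def mulPEmb (hp : p.Prime) : ℤ ↪o ℤ :=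
  OrderEmbedding.ofStrictMono (fun j => (p : ℤ) * j)
    (fun a b h => by
      have : (0:ℤ) < p := by exact_mod_cast hp.pos
      exact mul_lt_mul_of_pos_left h this)

lemma mulPEmb_apply (hp : p.Prime) (j : ℤ) : mulPEmb hp j = (p : ℤ) * j := rfl

/-- The "Frobenius" operation on Laurent series: raise coefficients to the `p`-th power and
multiply exponents by `p`. -/
noncomputable def Frob (hp : p.Prime) (g : LaurentSeries k) : LaurentSeries k :=
  embDomain (mulPEmb hp) (g.map (frobenius k p))

lemma map_frob_add (x y : LaurentSeries k) :
    (x + y).map (frobenius k p) = x.map (frobenius k p) + y.map (frobenius k p) := by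
  ext a
  simp [HahnSeries.map_coeff, map_add]

lemma map_frob_single (hp : p.Prime) (a : ℤ) (r : k) :
    (single a r : LaurentSeries k).map (frobenius k p) = single a (r ^ p) := by
  ext b
  simp only [HahnSeries.map_coeff, coeff_single]
  split <;> simp [frobenius_def, hp.ne_zero]

lemma Frob_add (hp : p.Prime) (x y : LaurentSeries k) :
    Frob hp (x + y) = Frob hp x + Frob hp y := by
  unfold Frob
  rw [map_frob_add, embDomain_add]

lemma Frob_zero (hp : p.Prime) : Frob hp (0 : LaurentSeries k) = 0 := by
  unfold Frob
  have : (0 : LaurentSeries k).map (frobenius k p) = 0 := by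
    ext; simp
  rw [this, embDomain_zero]

lemma Frob_single (hp : p.Prime) (a : ℤ) (r : k) :
    Frob hp (single a r) = single ((p : ℤ) * a) (r ^ p) := by
  unfold Frob
  rw [map_frob_single hp, embDomain_single, mulPEmb_apply hp]

lemma Frob_coeff_eq_zero (hp : p.Prime) (g : LaurentSeries k) {m : ℤ}
    (hm : ∀ j : ℤ, m = (p : ℤ) * j → g.coeff j = 0) : (Frob hp g).coeff m = 0 := by
  unfold Frob
  by_cases h : m ∈ Set.range (mulPEmb hp)
  · obtain ⟨j, rfl⟩ := h
    rw [embDomain_coeff, HahnSeries.map_coeff]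
    have := hm j rfl
    simp [this]
  · exact embDomain_notin_range h

instance : CharP (LaurentSeries k) p :=
  charP_of_injective_ringHom (f := (C : k →+* LaurentSeries k)) C_injective p

/-- support of a power of a series with support in `Ioi M` lies in `Ioi (q*M)` for `q ≥ 1`. -/
lemma coeff_pow_high (x : LaurentSeries k) (M : ℤ) (hx : ∀ j ≤ M, x.coeff j = 0)
    (q : ℕ) (hq : 1 ≤ q) : ∀ m ≤ (q : ℤ) * M, (x ^ q).coeff m = 0 := by
  induction q with
  | zero => omega
  | succ n ih =>
    intro m hm
    rcases Nat.eq_or_lt_of_le hq with h1 | h1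
    · simp only [← h1, pow_one] at *
      exact hx m (by simpa using hm)
    · have hn : 1 ≤ n := by omega
      rw [pow_succ]
      by_contra hne
      have hmem : m ∈ (x ^ n * x).support := hne
      obtain ⟨i, hi, j, hj, rfl⟩ := support_mul_subset hmem
      have hiM : (n : ℤ) * M < i := by
        by_contra hle
        exact hi (ih hn i (by omega))
      have hjM : M < j := by
        by_contra hle
        exact hj (hx j (by omega))
      have : ((n : ℤ) + 1) * M < i + j := by nlinarith
      push_cast at hm
      omega

lemma sum_single_pow (hp : p.Prime) (t : Finset ℤ) (c : ℤ → k) :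
    (∑ j ∈ t, (single j (c j) : LaurentSeries k)) ^ p
      = Frob hp (∑ j ∈ t, single j (c j)) := by
  haveI : Fact p.Prime := ⟨hp⟩
  classical
  induction t using Finset.induction with
  | empty => simp [Frob_zero hp, zero_pow hp.ne_zero]
  | insert _ _ ha ih =>
    rw [Finset.sum_insert ha, add_pow_char, Frob_add hp, ih,
      Frob_single hp, single_pow, nsmul_eq_mul]

lemma key (hp : p.Prime) (g : LaurentSeries k) : g ^ p = Frob hp g := by
  haveI : Fact p.Prime := ⟨hp⟩
  ext m
  set M : ℤ := max m 0 with hM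
  have hfin : (g.support ∩ Set.Iic M).Finite := by
    rcases Set.eq_empty_or_nonempty (g.support ∩ Set.Iic M) with h | h
    · simp [h]
    · have hwf : (g.support ∩ Set.Iic M).IsWF :=
        g.isWF_support.subset Set.inter_subset_left
      refine (Set.finite_Icc (hwf.min h) M).subset ?_
      intro x hx
      exact ⟨hwf.min_le h hx, hx.2⟩
  set s : Finset ℤ := hfin.toFinset with hs
  set h : LaurentSeries k := ∑ j ∈ s, single j (g.coeff j) with hh
  set r : LaurentSeries k := g - h with hr
  have hcoeff_h : ∀ j : ℤ, h.coeff j = if j ∈ s then g.coeff j else 0 := by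
    intro j
    rw [hh]
    rw [show (∑ j ∈ s, (single j (g.coeff j) : LaurentSeries k)).coeff j
        = ∑ i ∈ s, (single i (g.coeff i) : LaurentSeries k).coeff j from
      map_sum (coeff.addMonoidHom j) _ s]
    by_cases hj : j ∈ s
    · rw [Finset.sum_eq_single j]
      · simp [hj]
      · intro b _ hb; exact coeff_single_of_ne (Ne.symm hb)
      · intro hj'; exact absurd hj hj'
    · rw [if_neg hj]
      exact Finset.sum_eq_zero fun b hb => coeff_single_of_ne (by rintro rfl; exact hj hb)
  have hrcoeff : ∀ j ≤ M, r.coeff j = 0 := by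
    intro j hj
    rw [hr, HahnSeries.coeff_sub, hcoeff_h]
    by_cases hjs : j ∈ s
    · simp [hjs]
    · rw [if_neg hjs]
      have hc : g.coeff j = 0 := by
        by_contra hc
        exact hjs (by rw [hs, Set.Finite.mem_toFinset]
                      exact ⟨(HahnSeries.mem_support g j).2 hc, hj⟩)
      simp [hc]
  have hsplit : g = h + r := by rw [hr]; ring
  have hFh : h ^ p = Frob hp h := by
    rw [hh]; exact sum_single_pow hp s _
  have hMm : m ≤ (p : ℤ) * M := by
    have hp1 : (1 : ℤ) ≤ p := by exact_mod_cast hp.one_lt.le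
    have hM0 : 0 ≤ M := le_max_right _ _
    have : M ≤ (p : ℤ) * M := le_mul_of_one_le_left hM0 hp1
    exact le_trans (le_max_left _ _) this
  have hrp : (r ^ p).coeff m = 0 :=
    coeff_pow_high r M hrcoeff p hp.one_le m hMm
  have hFr : (Frob hp r).coeff m = 0 := by
    refine Frob_coeff_eq_zero hp r fun j hj => ?_
    refine hrcoeff j ?_
    by_contra hjM
    push_neg at hjM
    have hp1 : (1 : ℤ) ≤ p := by exact_mod_cast hp.one_lt.le
    nlinarith
  calc (g ^ p).coeff m = ((h + r) ^ p).coeff m := by rw [← hsplit]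
    _ = (h ^ p + r ^ p).coeff m := by rw [add_pow_char]
    _ = (h ^ p).coeff m := by rw [HahnSeries.coeff_add, hrp, add_zero]
    _ = (Frob hp h).coeff m := by rw [hFh]
    _ = (Frob hp h).coeff m + (Frob hp r).coeff m := by rw [hFr, add_zero]
    _ = (Frob hp (h + r)).coeff m := by rw [Frob_add hp, HahnSeries.coeff_add]
    _ = (Frob hp g).coeff m := by rw [← hsplit]

lemma support_pow_dvd (hp : p.Prime) (n : ℕ) (g : LaurentSeries k) {m : ℤ}
    (hm : (g ^ p ^ n).coeff m ≠ 0) : (p : ℤ) ^ n ∣ m := by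
  induction n generalizing g m with
  | zero => simp
  | succ n ih =>
    rw [pow_succ, pow_mul, key hp] at hm
    have hmem : m ∈ (Frob hp (g ^ p ^ n)).support := hm
    obtain ⟨j, hj, rfl⟩ := support_embDomain_subset hmem
    rw [HahnSeries.mem_support, HahnSeries.map_coeff] at hj
    have hj' : (g ^ p ^ n).coeff j ≠ 0 := fun h => hj (by simp [h])
    obtain ⟨c, rfl⟩ := ih g hj'
    exact ⟨c, by rw [mulPEmb_apply hp]; ring⟩

end Aux

/-- For a perfect field `k` of characteristic `p`, an element of the Laurent series field
`k((t))` is a `p^n`-th power for every `n` if and only if it is a constant series,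
i.e. lies in the image of `k`. -/
theorem stmt_0 (p : ℕ) (hp : p.Prime) (k : Type*) [Field k] [CharP k p] [ExpChar k p]
    [PerfectRing k p] (f : LaurentSeries k) :
    (∀ n : ℕ, ∃ g : LaurentSeries k, g ^ p ^ n = f) ↔
      f ∈ Set.range (algebraMap k (LaurentSeries k)) := by
  constructor
  · intro hroots
    have hsupp : ∀ m : ℤ, f.coeff m ≠ 0 → m = 0 := by
      intro m hm
      by_contra hm0
      obtain ⟨g, hg⟩ := hroots (m.natAbs + 1)
      have hdvd : (p : ℤ) ^ (m.natAbs + 1) ∣ m := by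
        exact support_pow_dvd hp (m.natAbs + 1) g (by rw [hg]; exact hm)
      have hlt : |m| < (p : ℤ) ^ (m.natAbs + 1) := by
        rw [Int.abs_eq_natAbs]
        exact_mod_cast (Nat.lt_pow_self (n := m.natAbs + 1) hp.one_lt) |>.trans_le' (by omega)
      exact hm0 (Int.eq_zero_of_abs_lt_dvd hdvd hlt)
    refine ⟨f.coeff 0, ?_⟩
    have halg : ∀ c : k, algebraMap k (LaurentSeries k) c = single (0:ℤ) c := fun c => by
      rw [HahnSeries.algebraMap_apply', ← PowerSeries.C_eq_algebraMap,
        HahnSeries.ofPowerSeries_C, HahnSeries.C_apply]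
    ext m
    by_cases hm : m = 0
    · subst hm
      rw [halg, coeff_single_same]
    · have h1 : f.coeff m = 0 := by
        by_contra hne
        exact hm (hsupp m hne)
      rw [halg, coeff_single_of_ne hm, h1]
  · rintro ⟨c, rfl⟩
    intro n
    obtain ⟨d, hd⟩ := (frobeniusEquiv k p).surjective.iterate n c
    refine ⟨algebraMap k (LaurentSeries k) d, ?_⟩
    rw [← map_pow]
    congr 1
    rw [← hd, coe_frobeniusEquiv, iterate_frobenius]
end

section
/- Let p be a prime and let F ⊆ K be finite extensions of ℚ_p with [K:F] > 1. Then the set { x ∈ K^× : N_{K/F}(x) = 1 } of elements of norm 1 is infinite. -/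
open Polynomial in
lemma aux_pow_bot {F K : Type*} [Field F] [Field K] [Algebra F K] [CharZero F]
    (M : ℕ) (hM : 0 < M) (hpow : ∀ x : K, x ^ M ∈ (⊥ : Subalgebra F K)) (x : K) :
    x ∈ (⊥ : Subalgebra F K) := by
  by_contra hx
  set A := Subalgebra.toSubmodule (⊥ : Subalgebra F K) with hA
  have hxA : x ∉ A := hx
  set π := A.mkQ with hπ
  have hπx : π x ≠ 0 := by
    simpa [hπ, Submodule.Quotient.mk_eq_zero] using hxA
  have hd : ¬ ∀ φ : Module.Dual F (K ⧸ A), φ (π x) = 0 :=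
    fun hh => hπx ((Module.forall_dual_apply_eq_zero_iff F _).mp hh)
  push_neg at hd
  obtain ⟨φ, hφ⟩ := hd
  set a : ℕ → F := fun k => φ (π (x ^ k)) with ha
  have key : ∀ t : F, ∑ k ∈ Finset.range (M + 1),
      ((M.choose k : F) * a k) * t ^ (M - k) = 0 := by
    intro t
    have h1 : (x + algebraMap F K t) ^ M ∈ A := hpow _
    have h2 : φ (π ((x + algebraMap F K t) ^ M)) = 0 := by
      have hz : π ((x + algebraMap F K t) ^ M) = 0 := by
        rw [hπ, Submodule.mkQ_apply, Submodule.Quotient.mk_eq_zero]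
        exact h1
      rw [hz, map_zero]
    rw [add_pow] at h2
    rw [← h2]
    rw [map_sum, map_sum]
    apply Finset.sum_congr rfl
    intro k _
    have : x ^ k * algebraMap F K t ^ (M - k) * (M.choose k : K)
        = ((M.choose k : F) * t ^ (M - k)) • x ^ k := by
      rw [Algebra.smul_def, map_mul, map_pow]
      push_cast
      ring
    rw [this, map_smul, map_smul, smul_eq_mul, ha]
    ring
  set q : F[X] := ∑ k ∈ Finset.range (M + 1),
      C ((M.choose k : F) * a k) * X ^ (M - k) with hq
  have hq0 : q = 0 := by
    apply Polynomial.zero_of_eval_zero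
    intro t
    simpa [hq, eval_finset_sum] using key t
  have hc : q.coeff (M - 1) = (M : F) * a 1 := by
    rw [hq, finset_sum_coeff]
    rw [Finset.sum_eq_single 1]
    · rw [coeff_C_mul, coeff_X_pow, if_pos rfl, mul_one, Nat.choose_one_right]
    · intro k hk hk1
      have hkM : k ≤ M := Nat.lt_succ_iff.mp (Finset.mem_range.mp hk)
      have : M - k ≠ M - 1 := by omega
      rw [coeff_C_mul, coeff_X_pow, if_neg (fun h => this h.symm), mul_zero]
    · intro h1
      exact absurd (Finset.mem_range.mpr (by omega)) h1
  rw [hq0] at hc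
  simp only [coeff_zero] at hc
  have : a 1 = 0 := by
    have hM' : (M : F) ≠ 0 := Nat.cast_ne_zero.mpr hM.ne'
    rcases mul_eq_zero.mp hc.symm with h' | h'
    · exact absurd h' hM'
    · exact h'
  rw [ha] at this
  simp only [pow_one] at this
  exact hφ this

/-- If `F ⊆ K` are finite extensions of `ℚ_p` with `[K : F] > 1`, then the set of
elements of `K^×` of norm `1` (for the norm of `K/F`) is infinite. -/
theorem stmt_1 (p : ℕ) [Fact p.Prime] (F K : Type*) [Field F] [Field K]
    [Algebra ℚ_[p] F] [Algebra ℚ_[p] K] [Algebra F K] [IsScalarTower ℚ_[p] F K]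
    [FiniteDimensional ℚ_[p] F] [FiniteDimensional ℚ_[p] K]
    (h : 1 < Module.finrank F K) :
    {x : K | x ≠ 0 ∧ Algebra.norm F x = 1}.Infinite := by
  have : CharZero K := charZero_of_injective_algebraMap (algebraMap ℚ_[p] K).injective
  have : CharZero F := charZero_of_injective_algebraMap (algebraMap ℚ_[p] F).injective
  have : FiniteDimensional F K := FiniteDimensional.right ℚ_[p] F K
  intro hfin
  -- the subgroup of norm-one units
  set ν : Kˣ →* Fˣ := Units.map (Algebra.norm F : K →* F) with hν
  set H : Subgroup Kˣ := ν.ker with hH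
  have hHfin : Finite H := by
    have : Set.MapsTo (fun u : H => (u : Kˣ) : H → Kˣ) Set.univ Set.univ := fun _ _ => trivial
    apply Set.Finite.to_subtype (s := (H : Set Kˣ))
    have hinj : Set.InjOn (fun u : Kˣ => (u : K)) (H : Set Kˣ) :=
      fun u _ v _ huv => Units.ext huv
    apply Set.Finite.of_finite_image _ hinj
    apply hfin.subset
    rintro y ⟨u, hu, rfl⟩
    refine ⟨u.ne_zero, ?_⟩
    have := congrArg (Units.val) (hu : ν u = 1)
    simpa [hν] using this
  set n := Module.finrank F K with hn
  set m := Nat.card H with hm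
  have hm0 : 0 < m := Nat.card_pos
  set M := n * m with hM
  have hM0 : 0 < M := Nat.mul_pos (by omega) hm0
  -- every M-th power lies in the bottom subalgebra
  have hpow : ∀ x : K, x ^ M ∈ (⊥ : Subalgebra F K) := by
    intro x
    rcases eq_or_ne x 0 with rfl | hx0
    · rw [zero_pow hM0.ne']; exact zero_mem _
    set u : Kˣ := Units.mk0 x hx0 with hu
    set ι : Fˣ →* Kˣ := Units.map (algebraMap F K : F →+* K).toMonoidHom with hι
    have hνι : ∀ c : Fˣ, ν (ι c) = c ^ n := by
      intro c
      ext
      have h' : (Algebra.norm F) (algebraMap F K (c : F)) = (c : F) ^ n := Algebra.norm_algebraMap _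
      simp only [hν, hι, Units.coe_map, MonoidHom.coe_coe, RingHom.toMonoidHom_eq_coe,
        Units.val_pow_eq_pow_val]
      exact h'
    have hg : u ^ n * (ι (ν u))⁻¹ ∈ H := by
      rw [hH, MonoidHom.mem_ker, map_mul, map_pow, map_inv, hνι]
      group
    have hgm : (u ^ n * (ι (ν u))⁻¹) ^ m = 1 := by
      have h1 := pow_card_eq_one' (x := (⟨u ^ n * (ι (ν u))⁻¹, hg⟩ : H))
      rw [← hm] at h1
      have h2 := congrArg (Subtype.val) h1
      simp at h2
      exact h2
    have h1 : u ^ M = (ι (ν u)) ^ m := by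
      rw [mul_pow, inv_pow, mul_inv_eq_one] at hgm
      rw [hM, pow_mul]
      exact hgm
    have hval : x ^ M = algebraMap F K (((ν u : Fˣ) : F) ^ m) := by
      have h2 := congrArg Units.val h1
      simpa [hι, Units.coe_map, map_pow, hu] using h2
    rw [hval]
    exact ⟨_, rfl⟩
  have : (⊥ : Subalgebra F K) = ⊤ := by
    ext y; simp [aux_pow_bot M hM0 hpow y]
  rw [Subalgebra.bot_eq_top_iff_finrank_eq_one] at this
  omega
end

section
/- Let Ω be a field, k a subfield of Ω, and x, y ∈ Ω elements that are algebraically independent over k. If an element α ∈ Ω is algebraic over the subfield k(x) generated by x and also algebraic over the subfield k(y) generated by y, then α is algebraic over k. -/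
open Polynomial in
set_option maxHeartbeats 1000000 in
set_option synthInstance.maxHeartbeats 100000 in
theorem frac_aux {k Ω : Type*} [Field k] [Field Ω] [Algebra k Ω] (t a : Ω) :
    IsAlgebraic (IntermediateField.adjoin k {t}) a ↔ IsAlgebraic (Algebra.adjoin k {t}) a := by
  letI : Algebra (Algebra.adjoin k {t}) (IntermediateField.adjoin k {t}) :=
    (Subalgebra.inclusion (IntermediateField.algebra_adjoin_le_adjoin k {t})).toRingHom.toAlgebra
  haveI : IsScalarTower (Algebra.adjoin k {t}) (IntermediateField.adjoin k {t}) Ω :=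
    IsScalarTower.of_algebraMap_eq (congrFun rfl)
  haveI : IsFractionRing (Algebra.adjoin k {t}) (IntermediateField.adjoin k {t}) :=
    { map_units := by
        rintro s
        refine isUnit_iff_ne_zero.mpr fun h0 => ?_
        have h1 := congrArg (fun z : IntermediateField.adjoin k {t} => (z : Ω)) h0
        have hzero : (s : Algebra.adjoin k {t}) = 0 := Subtype.ext h1
        exact mem_nonZeroDivisors_iff_ne_zero.mp s.2 hzero
      surj := by
        rintro z
        obtain ⟨r0, s0, hz⟩ := (IntermediateField.mem_adjoin_simple_iff k (z : Ω)).mp z.2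
        by_cases hs : aeval t s0 = 0
        · refine ⟨⟨0, 1⟩, ?_⟩
          have hz0 : (z : Ω) = 0 := by rw [hz, hs, div_zero]
          apply Subtype.ext
          simpa using hz0
        · refine ⟨⟨⟨aeval t r0, aeval_mem_adjoin_singleton k t⟩,
            ⟨⟨aeval t s0, aeval_mem_adjoin_singleton k t⟩,
              mem_nonZeroDivisors_of_ne_zero fun h0 => hs (congrArg Subtype.val h0)⟩⟩, ?_⟩
          apply Subtype.ext
          show (z : Ω) * aeval t s0 = aeval t r0
          rw [hz, div_mul_cancel₀ _ hs]
      exists_of_eq := by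
        intro u v h
        exact ⟨1, by rw [Subalgebra.inclusion_injective _ h]⟩ }
  exact (IsFractionRing.isAlgebraic_iff (Algebra.adjoin k {t}) (IntermediateField.adjoin k {t}) Ω).symm

set_option maxHeartbeats 1000000 in
set_option synthInstance.maxHeartbeats 100000 in
/-- If `x, y ∈ Ω` are algebraically independent over a subfield `k`, then any `α ∈ Ω`
which is algebraic over both `k(x)` and `k(y)` is algebraic over `k`. -/
theorem stmt_3 (k Ω : Type*) [Field k] [Field Ω] [Algebra k Ω]
    (x y α : Ω) (h : AlgebraicIndependent k ![x, y])
    (hx : IsAlgebraic (IntermediateField.adjoin k {x}) α)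
    (hy : IsAlgebraic (IntermediateField.adjoin k {y}) α) :
    IsAlgebraic k α := by
  by_contra hT
  change Transcendental k α at hT
  have hx_t : Transcendental k x := by have := h.transcendental 0; simpa using this
  have hy_t : Transcendental k y := by have := h.transcendental 1; simpa using this
  have hrx : Set.range ![x] = ({x} : Set Ω) := by rw [Set.range_unique]; simp
  have hry : Set.range ![y] = ({y} : Set Ω) := by rw [Set.range_unique]; simp
  have hrα : Set.range ![α] = ({α} : Set Ω) := by rw [Set.range_unique]; simp
  -- exchange: y is algebraic over k(α)
  have hyα : IsAlgebraic (Algebra.adjoin k {α}) y := by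
    by_contra hT2
    have pair2 : AlgebraicIndependent k (fun o : Option (Fin 1) => o.elim y ![α]) :=
      ((algebraicIndependent_iff_transcendental.mpr hT).option_iff_transcendental y).mpr (by rwa [hrα])
    have pair1 : AlgebraicIndependent k (fun o : Option (Fin 1) => o.elim α ![y]) := by
      have hcomp := pair2.comp (fun o : Option (Fin 1) => o.elim (some 0) ![none]) (by decide)
      convert hcomp using 1
      funext o
      rcases o with _ | i
      · simp
      · fin_cases i; simp
    have htr : Transcendental (Algebra.adjoin k (Set.range ![y])) α :=
      ((algebraicIndependent_iff_transcendental.mpr hy_t).option_iff_transcendental α).mp pair1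
    rw [hry] at htr
    exact htr ((frac_aux y α).mp hy)
  have hy_field : IsAlgebraic (IntermediateField.adjoin k {α}) y := (frac_aux α y).mpr hyα
  -- transitivity: y algebraic over k(x)
  have hyF : IsAlgebraic (IntermediateField.adjoin k {x}) y := by
    set F := IntermediateField.adjoin k {x} with hF
    have hα_int : IsIntegral F α := hx.isIntegral
    haveI : Algebra.IsAlgebraic F (IntermediateField.adjoin F {α}) :=
      IntermediateField.isAlgebraic_adjoin_simple hα_int
    haveI : Algebra.IsIntegral F (IntermediateField.adjoin F {α}) :=
      Algebra.isAlgebraic_iff_isIntegral.mp inferInstance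
    have hle' : IntermediateField.adjoin k {α} ≤
        (IntermediateField.adjoin F {α}).restrictScalars k := by
      apply IntermediateField.adjoin_le_iff.mpr
      intro s hs
      rcases hs with rfl
      exact IntermediateField.mem_adjoin_simple_self F s
    letI : Algebra (IntermediateField.adjoin k {α}) (IntermediateField.adjoin F {α}) :=
      (Subfield.inclusion (fun u hu => hle' hu)).toAlgebra
    haveI : IsScalarTower (IntermediateField.adjoin k {α}) (IntermediateField.adjoin F {α}) Ω :=
      IsScalarTower.of_algebraMap_eq (congrFun rfl)
    have hyF'2 : IsAlgebraic (IntermediateField.adjoin F {α}) y :=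
      hy_field.extendScalars
        (algebraMap (IntermediateField.adjoin k {α}) (IntermediateField.adjoin F {α})).injective
    exact (isIntegral_trans y hyF'2.isIntegral).isAlgebraic
  -- contradiction with algebraic independence of x, y
  have h5 : Transcendental (Algebra.adjoin k (Set.range ![x])) y := by
    have h' : AlgebraicIndependent k (fun o : Option (Fin 1) => o.elim y ![x]) := by
      have hcomp := h.comp (fun o : Option (Fin 1) => o.elim 1 ![0]) (by decide)
      convert hcomp using 1
      funext o
      rcases o with _ | i
      · simp
      · fin_cases i; simp
    exact ((algebraicIndependent_iff_transcendental.mpr hx_t).option_iff_transcendental y).mp h'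
  rw [hrx] at h5
  exact h5 ((frac_aux x y).mp hyF)
end

section
/- Let E be a field of characteristic p > 0 and q = p^m with m ≥ 1, and let k = { a ∈ E : a^q = a } be the subfield of E fixed by the q-power Frobenius. Let D be an E-vector space and f : D → D an additive map satisfying f(a·v) = a^q·f(v) for all a ∈ E and v ∈ D. Then every family of vectors of D fixed by f (i.e. with f(v_i) = v_i for every index i) that is linearly independent over k is linearly independent over E. -/
/-- Let `E` be a field of characteristic `p > 0`, `q = p^m` (`m ≥ 1`), and
`k = {a ∈ E | a^q = a}` its subfield of `q`-Frobenius-fixed elements. If `f : D → D` is an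
additive `q`-semilinear map on an `E`-vector space `D`, then any family of `f`-fixed
vectors which is linearly independent over `k` (expressed elementwise: only the trivial
linear relation with coefficients satisfying `c^q = c` holds) is linearly
independent over `E`. -/
theorem stmt_5 (p : ℕ) (hp : p.Prime) (E : Type*) [Field E] [CharP E p]
    (m : ℕ) (hm : 1 ≤ m) (q : ℕ) (hq : q = p ^ m)
    (D : Type*) [AddCommGroup D] [Module E D]
    (f : D → D) (hadd : ∀ x y : D, f (x + y) = f x + f y)
    (hsmul : ∀ (a : E) (x : D), f (a • x) = a ^ q • f x)
    (ι : Type*) (v : ι → D) (hfix : ∀ i, f (v i) = v i)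
    (hindep : ∀ (s : Finset ι) (c : ι → E), (∀ i, c i ^ q = c i) →
      ∑ i ∈ s, c i • v i = 0 → ∀ i ∈ s, c i = 0) :
    ∀ (s : Finset ι) (c : ι → E), ∑ i ∈ s, c i • v i = 0 → ∀ i ∈ s, c i = 0 := by
  classical
  have hq0 : q ≠ 0 := by
    subst hq; exact pow_ne_zero _ hp.pos.ne'
  have hf0 : f 0 = 0 := by
    have h := hadd 0 0
    rw [add_zero] at h
    exact (left_eq_add.mp h)
  have hfsum : ∀ (t : Finset ι) (e : ι → E),
      f (∑ i ∈ t, e i • v i) = ∑ i ∈ t, e i ^ q • v i := by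
    intro t e
    induction t using Finset.induction with
    | empty => simpa using hf0
    | insert _ _ hnot ih =>
        rw [Finset.sum_insert hnot, hadd, hsmul, hfix, ih, Finset.sum_insert hnot]
  intro s
  induction s using Finset.strongInduction with
  | _ s ih =>
    intro c hc
    by_contra h
    push_neg at h
    obtain ⟨j, hj, hcj⟩ := h
    set d : ι → E := fun i => c i / c j with hd
    have hdj : d j = 1 := div_self hcj
    have hd0 : ∑ i ∈ s, d i • v i = 0 := by
      have := congrArg (fun x => (c j)⁻¹ • x) hc
      simp only [Finset.smul_sum, smul_smul, smul_zero] at this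
      convert this using 2 with i
      simp [hd, div_eq_mul_inv, mul_comm]
    have hq0' : ∑ i ∈ s, (d i ^ q) • v i = 0 := by
      rw [← hfsum s d, hd0, hf0]
    have hsub : ∑ i ∈ s, (d i ^ q - d i) • v i = 0 := by
      simp only [sub_smul, Finset.sum_sub_distrib, hq0', hd0, sub_zero]
    have herase : ∑ i ∈ s.erase j, (d i ^ q - d i) • v i = 0 := by
      have h2 := Finset.add_sum_erase s (fun i => (d i ^ q - d i) • v i) hj
      simp only [hsub, hdj, one_pow, sub_self, zero_smul, zero_add] at h2
      exact h2
    have hfixcoef : ∀ i ∈ s.erase j, d i ^ q - d i = 0 :=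
      ih (s.erase j) (Finset.erase_ssubset hj) _ herase
    -- all coefficients d are Frobenius-fixed on s
    set d' : ι → E := fun i => if i ∈ s then d i else 0 with hd'
    have hd'fix : ∀ i, d' i ^ q = d' i := by
      intro i
      by_cases hi : i ∈ s
      · simp only [hd', if_pos hi]
        by_cases hij : i = j
        · rw [hij, hdj, one_pow]
        · have := hfixcoef i (Finset.mem_erase.mpr ⟨hij, hi⟩)
          exact sub_eq_zero.mp this
      · simp [hd', if_neg hi, zero_pow hq0]
    have hd'sum : ∑ i ∈ s, d' i • v i = 0 := by
      rw [← hd0]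
      exact Finset.sum_congr rfl fun i hi => by simp [hd', if_pos hi]
    have := hindep s d' hd'fix hd'sum j hj
    rw [hd'] at this
    simp only [if_pos hj] at this
    rw [hdj] at this
    exact one_ne_zero this
end

section
/- Let R be a complete discrete valuation ring with uniformizer π and residue field k. Let S = R[[u]][1/u] be the localization of the power series ring R[[u]] at the multiplicative set of powers of u, and let A be the π-adic completion of S. Then A is a complete discrete valuation ring in which the image of π generates the maximal ideal, and the quotient A/πA is isomorphic as a ring to the Laurent series field k((u)). -/
set_option synthInstance.maxHeartbeats 1000000
set_option maxHeartbeats 1000000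
open IsLocalRing

variable (R : Type*) [CommRing R] [IsDomain R] [IsDiscreteValuationRing R]

/-- `S = R[[u]][1/u]`, the localization of the power series ring `R[[u]]` away from `u`. -/
noncomputable abbrev laurentLoc :=
  Localization.Away (PowerSeries.X : PowerSeries R)

/-- The image of `π ∈ R` in `S = R[[u]][1/u]`. -/
noncomputable def piImage (π : R) : laurentLoc R :=
  algebraMap (PowerSeries R) (laurentLoc R) (PowerSeries.C π)

/-- The `π`-adic completion `A` of `S = R[[u]][1/u]`. -/
noncomputable abbrev piAdicCompletion (π : R) :=
  AdicCompletion (Ideal.span {piImage R π}) (laurentLoc R)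

namespace Stmt8Aux

lemma smul_top_eq {T : Type*} [CommRing T] (I : Ideal T) (n : ℕ) :
    (I ^ n • ⊤ : Ideal T) = I ^ n := by
  ext x; simp

lemma transitionMap_mk {T : Type*} [CommRing T] (I : Ideal T) {m n : ℕ} (h : m ≤ n) (x : T) :
    AdicCompletion.transitionMap I T h (Submodule.Quotient.mk x) = Submodule.Quotient.mk x := rfl

section General

variable {T : Type*} [CommRing T] [IsDomain T] {p : T}

variable (p) in
/-- Abbreviation for the adic completion. -/
noncomputable abbrev AC := AdicCompletion (Ideal.span {p} : Ideal T) T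

lemma val_algebraMap (n : ℕ) (t : T) :
    (algebraMap T (AC p) t).val n =
      Submodule.Quotient.mk (p := ((Ideal.span {p}) ^ n • ⊤ : Ideal T)) t := rfl

lemma val_eq_zero_iff (hp : p ≠ 0) (n : ℕ) (x : (AC p)) :
    x.val n = 0 ↔ x ∈ (Ideal.span {algebraMap T (AC p) p}) ^ n := by
  set I : Ideal T := Ideal.span {p} with hI
  constructor
  · intro hx
    have hsur : ∀ m, ∃ t : T,
        (Submodule.Quotient.mk (p := (I ^ m • ⊤ : Ideal T)) t) = x.val m := fun m =>
      Submodule.Quotient.mk_surjective _ (x.val m)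
    choose t ht using hsur
    have key : ∀ m, ∃ y : T, t (n + m) = p ^ n * y := by
      intro m
      have h1 : (Submodule.Quotient.mk (p := (I ^ n • ⊤ : Ideal T)) (t (n + m))) = 0 := by
        have h2 := x.property (Nat.le_add_right n m)
        rw [← ht (n + m), transitionMap_mk] at h2
        rw [h2, hx]
      have h2 : t (n + m) ∈ (I ^ n • ⊤ : Ideal T) := (Submodule.Quotient.mk_eq_zero _).mp h1
      rw [smul_top_eq, hI, Ideal.span_singleton_pow, Ideal.mem_span_singleton] at h2
      obtain ⟨y, hy⟩ := h2
      exact ⟨y, hy⟩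
    choose y hy using key
    have compat : ∀ {m m' : ℕ} (h : m ≤ m'),
        AdicCompletion.transitionMap I T h
          (Submodule.Quotient.mk (p := (I ^ m' • ⊤ : Ideal T)) (y m')) =
          Submodule.Quotient.mk (p := (I ^ m • ⊤ : Ideal T)) (y m) := by
      intro m m' h
      rw [transitionMap_mk, Submodule.Quotient.eq]
      have h3 : t (n + m') - t (n + m) ∈ (I ^ (n + m) • ⊤ : Ideal T) := by
        rw [← Submodule.Quotient.eq]
        have h4 := x.property (Nat.add_le_add_left h n)
        rw [← ht (n + m'), transitionMap_mk] at h4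
        rw [h4, ht (n + m)]
      rw [smul_top_eq, hI, Ideal.span_singleton_pow, Ideal.mem_span_singleton] at h3
      obtain ⟨c, hc⟩ := h3
      rw [smul_top_eq, hI, Ideal.span_singleton_pow, Ideal.mem_span_singleton]
      refine ⟨c, ?_⟩
      apply mul_left_cancel₀ (pow_ne_zero n hp)
      rw [mul_sub, ← hy m', ← hy m, hc, ← mul_assoc, ← pow_add]
    set z : (AC p) := ⟨fun m => Submodule.Quotient.mk (y m), fun {m m'} h => compat h⟩ with hz
    have hxz : x = (algebraMap T (AC p) p) ^ n * z := by
      ext m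
      rw [AdicCompletion.val_mul]
      have hq : ((algebraMap T (AC p) p) ^ n).val m =
          Submodule.Quotient.mk (p := (I ^ m • ⊤ : Ideal T)) (p ^ n) := by
        rw [← map_pow]; rfl
      rw [hq]
      have hzm : z.val m = Submodule.Quotient.mk (p := (I ^ m • ⊤ : Ideal T)) (y m) := rfl
      rw [hzm]
      have hmul : (Submodule.Quotient.mk (p := (I ^ m • ⊤ : Ideal T)) (p ^ n)) *
          (Submodule.Quotient.mk (p := (I ^ m • ⊤ : Ideal T)) (y m)) =
          Submodule.Quotient.mk (p := (I ^ m • ⊤ : Ideal T)) (p ^ n * y m) := by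
        rw [Ideal.Quotient.mk_eq_mk, Ideal.Quotient.mk_eq_mk, Ideal.Quotient.mk_eq_mk,
          map_mul]
      rw [hmul, ← hy m]
      calc x.val m = AdicCompletion.transitionMap I T (Nat.le_add_left m n) (x.val (n + m)) :=
            (x.property _).symm
        _ = Submodule.Quotient.mk (p := (I ^ m • ⊤ : Ideal T)) (t (n + m)) := by
            rw [← ht (n + m), transitionMap_mk]
    rw [hxz, Ideal.span_singleton_pow, Ideal.mem_span_singleton]
    exact Dvd.intro z rfl
  · intro hx
    rw [Ideal.span_singleton_pow, Ideal.mem_span_singleton] at hx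
    obtain ⟨z, rfl⟩ := hx
    rw [AdicCompletion.val_mul]
    have hq : ((algebraMap T (AC p) p) ^ n).val n =
        Submodule.Quotient.mk (p := (I ^ n • ⊤ : Ideal T)) (p ^ n) := by
      rw [← map_pow]; rfl
    rw [hq]
    have : (Submodule.Quotient.mk (p := (I ^ n • ⊤ : Ideal T)) (p ^ n)) = 0 := by
      rw [Submodule.Quotient.mk_eq_zero, smul_top_eq, hI, Ideal.span_singleton_pow]
      exact Ideal.mem_span_singleton_self _
    rw [this, zero_mul]


theorem isAdicComplete_completion (hp : p ≠ 0) :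
    IsAdicComplete (Ideal.span {algebraMap T (AC p) p}) (AC p) := by
  set J : Ideal (AC p) := Ideal.span {algebraMap T (AC p) p} with hJ
  refine { toIsHausdorff := ⟨?_⟩, toIsPrecomplete := ⟨?_⟩ }
  · intro x hx
    apply AdicCompletion.ext; intro n
    rw [AdicCompletion.val_zero_apply]
    have h1 := SModEq.zero.mp (hx n)
    rw [smul_top_eq] at h1
    exact (val_eq_zero_iff hp n x).mpr h1
  · intro f hf
    have hcompat : ∀ {m n : ℕ}, m ≤ n → (f n).val m = (f m).val m := by
      intro m n hmn
      have h1 := SModEq.sub_mem.mp (hf hmn).symm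
      rw [smul_top_eq] at h1
      have h2 := (val_eq_zero_iff hp m _).mpr h1
      rw [AdicCompletion.val_sub_apply, sub_eq_zero] at h2
      exact h2
    refine ⟨⟨fun n => (f n).val n, ?_⟩, ?_⟩
    · intro m n hmn
      rw [(f n).property hmn]
      exact hcompat hmn
    · intro n
      refine SModEq.sub_mem.mpr ?_
      rw [smul_top_eq]
      apply (val_eq_zero_iff hp n _).mp
      refine (AdicCompletion.val_sub_apply _ _ n).trans ?_
      exact sub_self _
    
theorem q_regular (hp : p ≠ 0) (z : AC p) (h : algebraMap T (AC p) p * z = 0) : z = 0 := by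
  set I : Ideal T := Ideal.span {p} with hI
  apply AdicCompletion.ext; intro n
  rw [AdicCompletion.val_zero_apply]
  obtain ⟨t, ht⟩ := Submodule.Quotient.mk_surjective _ (z.val (n + 1))
  have h1 : (Submodule.Quotient.mk (p := (I ^ (n + 1) • ⊤ : Ideal T)) (p * t)) = 0 := by
    have h2 : (algebraMap T (AC p) p * z).val (n + 1) = 0 := by rw [h, AdicCompletion.val_zero_apply]
    rw [AdicCompletion.val_mul, ← ht] at h2
    rw [← h2, val_algebraMap, Ideal.Quotient.mk_eq_mk, Ideal.Quotient.mk_eq_mk,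
      Ideal.Quotient.mk_eq_mk, map_mul]
  rw [Submodule.Quotient.mk_eq_zero, smul_top_eq, hI, Ideal.span_singleton_pow,
    Ideal.mem_span_singleton] at h1
  obtain ⟨c, hc⟩ := h1
  have h3 : t = p ^ n * c := by
    apply mul_left_cancel₀ hp
    rw [hc, pow_succ, mul_comm (p ^ n) p, mul_assoc]
  have h4 : z.val n = Submodule.Quotient.mk (p := (I ^ n • ⊤ : Ideal T)) t := by
    rw [← z.property (Nat.le_succ n), ← ht, transitionMap_mk]
  rw [h4, Submodule.Quotient.mk_eq_zero, smul_top_eq, hI, Ideal.span_singleton_pow,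
    Ideal.mem_span_singleton, h3]
  exact Dvd.intro c rfl

theorem pow_q_regular (hp : p ≠ 0) (n : ℕ) (z : AC p)
    (h : (algebraMap T (AC p) p) ^ n * z = 0) : z = 0 := by
  induction n with
  | zero => simpa using h
  | succ m ih =>
    apply ih
    apply q_regular hp
    rw [← h]; ring

lemma val_zero_of_zero (w : T ⧸ ((Ideal.span {p} : Ideal T) ^ 0 • ⊤ : Ideal T)) : w = 0 := by
  obtain ⟨t, rfl⟩ := Submodule.Quotient.mk_surjective _ w
  rw [Submodule.Quotient.mk_eq_zero]
  simp

theorem exists_factor (hp : p ≠ 0) (x : AC p) (hx : x ≠ 0) :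
    ∃ (a : ℕ) (x' : AC p), x'.val 1 ≠ 0 ∧ x = (algebraMap T (AC p) p) ^ a * x' := by
  classical
  have hex : ∃ m, x.val (m + 1) ≠ 0 := by
    by_contra hc
    push_neg at hc
    apply hx
    apply AdicCompletion.ext; intro n
    rw [AdicCompletion.val_zero]
    match n with
    | 0 => exact val_zero_of_zero _
    | Nat.succ m => exact hc m
  set a := Nat.find hex with ha
  have haspec : x.val (a + 1) ≠ 0 := Nat.find_spec hex
  have hva : x.val a = 0 := by
    by_cases h0 : a = 0
    · rw [h0]; exact val_zero_of_zero _
    · have hlt : a - 1 < a := by omega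
      have := Nat.find_min hex hlt
      rw [not_not] at this
      have heq : a - 1 + 1 = a := by omega
      rwa [heq] at this
  have hmem := (val_eq_zero_iff hp a x).mp hva
  rw [Ideal.span_singleton_pow, Ideal.mem_span_singleton] at hmem
  obtain ⟨x', hx'⟩ := hmem
  refine ⟨a, x', ?_, hx'⟩
  intro h1
  have h2 := (val_eq_zero_iff hp 1 x').mp h1
  rw [pow_one, Ideal.mem_span_singleton] at h2
  obtain ⟨x'', rfl⟩ := h2
  apply haspec
  apply (val_eq_zero_iff hp (a + 1) x).mpr
  rw [hx', Ideal.span_singleton_pow, Ideal.mem_span_singleton]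
  exact ⟨x'', by ring⟩

variable (p) in
/-- Evaluation at level one as a ring hom. -/
noncomputable def evalOne :
    AC p →+* T ⧸ ((Ideal.span {p} : Ideal T) ^ 1 • ⊤ : Ideal T) where
  toFun x := x.val 1
  map_one' := rfl
  map_mul' _ _ := rfl
  map_zero' := rfl
  map_add' _ _ := rfl

variable (p) in
/-- The canonical surjection `A → T ⧸ (p)`. -/
noncomputable def toQuot : AC p →+* T ⧸ (Ideal.span {p} : Ideal T) :=
  (Ideal.quotEquivOfEq (show ((Ideal.span {p} : Ideal T) ^ 1 • ⊤ : Ideal T) = Ideal.span {p} by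
    rw [smul_top_eq, pow_one])).toRingHom.comp (evalOne p)

theorem toQuot_surjective : Function.Surjective (toQuot p) := by
  intro y
  obtain ⟨z, hz⟩ := (Ideal.quotEquivOfEq
    (show ((Ideal.span {p} : Ideal T) ^ 1 • ⊤ : Ideal T) = Ideal.span {p} by
      rw [smul_top_eq, pow_one])).surjective y
  obtain ⟨w, hw⟩ := AdicCompletion.eval_surjective (Ideal.span {p}) T 1 z
  refine ⟨w, ?_⟩
  rw [toQuot, RingHom.comp_apply]
  have h1 : (evalOne p) w = z := hw
  rw [h1]; exact hz

theorem ker_toQuot (hp : p ≠ 0) :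
    RingHom.ker (toQuot p) = Ideal.span {algebraMap T (AC p) p} := by
  ext x
  rw [RingHom.mem_ker, toQuot, RingHom.comp_apply]
  have he : ∀ w, (Ideal.quotEquivOfEq
      (show ((Ideal.span {p} : Ideal T) ^ 1 • ⊤ : Ideal T) = Ideal.span {p} by
        rw [smul_top_eq, pow_one])).toRingHom w = 0 ↔ w = 0 := by
    intro w
    constructor
    · intro hw
      have h2 := congrArg (Ideal.quotEquivOfEq
        (show ((Ideal.span {p} : Ideal T) ^ 1 • ⊤ : Ideal T) = Ideal.span {p} by
          rw [smul_top_eq, pow_one])).symm hw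
      simpa using h2
    · intro hw; rw [hw, map_zero]
  rw [he]
  have : (evalOne p) x = x.val 1 := rfl
  rw [this, val_eq_zero_iff hp 1 x, pow_one]

variable (p) in
/-- `A ⧸ (p) ≃+* T ⧸ (p)`. -/
noncomputable def quotEquiv (hp : p ≠ 0) :
    ((AC p) ⧸ Ideal.span {algebraMap T (AC p) p}) ≃+* T ⧸ (Ideal.span {p} : Ideal T) :=
  (Ideal.quotEquivOfEq (ker_toQuot hp).symm).trans
    (RingHom.quotientKerEquivOfSurjective (toQuot_surjective (p := p)))


section Max

variable (hp : p ≠ 0) (hmax : (Ideal.span {p} : Ideal T).IsMaximal)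
include hp hmax

theorem one_val_ne : ((1 : AC p)).val 1 ≠ 0 := by
  intro h
  have h1 : (1 : T) ∈ ((Ideal.span {p} : Ideal T) ^ 1 • ⊤ : Ideal T) := by
    rw [← Submodule.Quotient.mk_eq_zero]
    have h2 : (Submodule.Quotient.mk (p := ((Ideal.span {p} : Ideal T) ^ 1 • ⊤ : Ideal T))
        (1 : T)) = ((1 : AC p)).val 1 := by
      rw [Ideal.Quotient.mk_eq_mk, map_one]; rfl
    rw [h2, h]
  rw [smul_top_eq, pow_one] at h1
  exact hmax.ne_top ((Ideal.eq_top_iff_one _).mpr h1)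

theorem completion_nontrivial : Nontrivial (AC p) := by
  refine ⟨0, 1, fun h => one_val_ne hp hmax ?_⟩
  rw [← h, AdicCompletion.val_zero_apply]

theorem completion_isDomain : IsDomain (AC p) := by
  letI := completion_nontrivial hp hmax
  have hnzd : ∀ x y : AC p, x * y = 0 → x = 0 ∨ y = 0 := by
    intro x y hxy
    by_contra hc
    push_neg at hc
    obtain ⟨hx, hy⟩ := hc
    obtain ⟨a, x', hx1, rfl⟩ := exists_factor hp x hx
    obtain ⟨b, y', hy1, rfl⟩ := exists_factor hp y hy
    have h1 : (algebraMap T (AC p) p) ^ (a + b) * (x' * y') = 0 := by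
      rw [← hxy]; ring
    have h2 : x' * y' = 0 := pow_q_regular hp (a + b) _ h1
    -- but (x' * y').val 1 ≠ 0
    obtain ⟨t1, ht1⟩ := Submodule.Quotient.mk_surjective _ (x'.val 1)
    obtain ⟨t2, ht2⟩ := Submodule.Quotient.mk_surjective _ (y'.val 1)
    have hm1 : t1 ∉ ((Ideal.span {p} : Ideal T) ^ 1 • ⊤ : Ideal T) := by
      intro hmem
      exact hx1 (by rw [← ht1, Submodule.Quotient.mk_eq_zero]; exact hmem)
    have hm2 : t2 ∉ ((Ideal.span {p} : Ideal T) ^ 1 • ⊤ : Ideal T) := by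
      intro hmem
      exact hy1 (by rw [← ht2, Submodule.Quotient.mk_eq_zero]; exact hmem)
    rw [smul_top_eq, pow_one] at hm1 hm2
    have hprime : (Ideal.span {p} : Ideal T).IsPrime := hmax.isPrime
    have hm12 : t1 * t2 ∉ ((Ideal.span {p} : Ideal T) ^ 1 • ⊤ : Ideal T) := by
      rw [smul_top_eq, pow_one]
      intro hmem
      rcases hprime.mem_or_mem hmem with h | h
      exacts [hm1 h, hm2 h]
    have h3 : (x' * y').val 1 = Submodule.Quotient.mk (t1 * t2) := by
      rw [AdicCompletion.val_mul, ← ht1, ← ht2, Ideal.Quotient.mk_eq_mk,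
        Ideal.Quotient.mk_eq_mk, Ideal.Quotient.mk_eq_mk, map_mul]
    rw [h2, AdicCompletion.val_zero_apply] at h3
    exact hm12 ((Submodule.Quotient.mk_eq_zero _).mp h3.symm)
  letI : NoZeroDivisors (AC p) :=
    ⟨fun {x y} h => hnzd x y h⟩
  exact NoZeroDivisors.to_isDomain _

theorem jSpan_isMaximal : (Ideal.span {algebraMap T (AC p) p}).IsMaximal := by
  letI := hmax
  letI : Field (T ⧸ (Ideal.span {p} : Ideal T)) := Ideal.Quotient.field _
  exact Ideal.Quotient.maximal_of_isField _
    (MulEquiv.isField (Field.toIsField _) (quotEquiv p hp).toMulEquiv)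

theorem completion_isLocal : IsLocalRing (AC p) := by
  letI : IsAdicComplete (Ideal.span {algebraMap T (AC p) p}) (AC p) :=
    isAdicComplete_completion hp
  apply IsLocalRing.of_unique_max_ideal
  refine ⟨Ideal.span {algebraMap T (AC p) p}, jSpan_isMaximal hp hmax, fun m hm => ?_⟩
  have h1 : Ideal.span {algebraMap T (AC p) p} ≤ (⊥ : Ideal (AC p)).jacobson :=
    IsAdicComplete.le_jacobson_bot _
  have h2 : (⊥ : Ideal (AC p)).jacobson ≤ m := sInf_le ⟨bot_le, hm⟩
  exact ((jSpan_isMaximal hp hmax).eq_of_le hm.ne_top (h1.trans h2)).symm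

theorem completion_maximalIdeal_eq :
    @maximalIdeal _ _ (completion_isLocal hp hmax) =
      Ideal.span {algebraMap T (AC p) p} := by
  letI := completion_isLocal hp hmax
  exact (IsLocalRing.eq_maximalIdeal (jSpan_isMaximal hp hmax)).symm

theorem q_irreducible : Irreducible (algebraMap T (AC p) p) := by
  letI := completion_isLocal hp hmax
  constructor
  · intro hu
    exact (jSpan_isMaximal hp hmax).ne_top
      (Ideal.eq_top_of_isUnit_mem _ (Ideal.mem_span_singleton_self _) hu)
  · intro a b hab
    by_contra hc
    push_neg at hc
    obtain ⟨ha, hb⟩ := hc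
    have ha' : a ∈ Ideal.span {algebraMap T (AC p) p} := by
      rw [← completion_maximalIdeal_eq hp hmax]
      exact IsLocalRing.mem_maximalIdeal a |>.mpr ha
    have hb' : b ∈ Ideal.span {algebraMap T (AC p) p} := by
      rw [← completion_maximalIdeal_eq hp hmax]
      exact IsLocalRing.mem_maximalIdeal b |>.mpr hb
    have h1 : algebraMap T (AC p) p ∈ (Ideal.span {algebraMap T (AC p) p}) ^ 2 := by
      have h1' := Ideal.mul_mem_mul ha' hb'
      rw [← hab] at h1'
      rwa [pow_two]
    have h2 := (val_eq_zero_iff hp 2 _).mpr h1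
    rw [val_algebraMap, Submodule.Quotient.mk_eq_zero, smul_top_eq,
      Ideal.span_singleton_pow, Ideal.mem_span_singleton] at h2
    obtain ⟨c, hc2⟩ := h2
    have h3 : (1 : T) = p * c := by
      apply mul_left_cancel₀ hp
      rw [mul_one, ← mul_assoc, ← pow_two]
      exact hc2
    exact hmax.ne_top ((Ideal.eq_top_iff_one _).mpr
      (Ideal.mem_span_singleton.mpr ⟨c, h3⟩))

theorem completion_dvr :
    @IsDiscreteValuationRing (AC p) _ (completion_isDomain hp hmax) := by
  letI := completion_isDomain hp hmax
  letI := completion_isLocal hp hmax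
  apply IsDiscreteValuationRing.ofHasUnitMulPowIrreducibleFactorization
  refine ⟨algebraMap T (AC p) p, q_irreducible hp hmax, fun {x} hx => ?_⟩
  obtain ⟨a, x', h1, h2⟩ := exists_factor hp x hx
  have hu : IsUnit x' := by
    by_contra hu
    apply h1
    have hmem : x' ∈ Ideal.span {algebraMap T (AC p) p} := by
      rw [← completion_maximalIdeal_eq hp hmax]
      exact IsLocalRing.mem_maximalIdeal x' |>.mpr hu
    apply (val_eq_zero_iff hp 1 x').mpr
    rwa [pow_one]
  exact ⟨a, hu.unit, by rw [IsUnit.unit_spec, ← h2]⟩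

end Max
end General

section Laurent

theorem residue_map_surjective :
    Function.Surjective (PowerSeries.map (IsLocalRing.residue R)) := by
  intro g
  have h : ∀ n, ∃ r : R, IsLocalRing.residue R r = PowerSeries.coeff n g := fun n =>
    Ideal.Quotient.mk_surjective _
  choose c hc using h
  refine ⟨PowerSeries.mk c, ?_⟩
  ext n
  rw [PowerSeries.coeff_map, PowerSeries.coeff_mk, hc]

/-- The map `R[[u]][1/u] → k((u))`. -/
noncomputable def psi :
    Localization.Away (PowerSeries.X : PowerSeries R) →+*
      LaurentSeries (IsLocalRing.ResidueField R) :=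
  IsLocalization.lift (M := Submonoid.powers (PowerSeries.X : PowerSeries R))
    (g := (algebraMap (PowerSeries (IsLocalRing.ResidueField R))
        (LaurentSeries (IsLocalRing.ResidueField R))).comp
      (PowerSeries.map (IsLocalRing.residue R)))
    (by
      rintro ⟨y, m, rfl⟩
      rw [RingHom.comp_apply]
      show IsUnit (algebraMap _ _ (PowerSeries.map (IsLocalRing.residue R)
        (PowerSeries.X ^ m)))
      rw [map_pow, PowerSeries.map_X, map_pow]
      exact (IsLocalization.map_units
        (M := Submonoid.powers (PowerSeries.X : PowerSeries (IsLocalRing.ResidueField R)))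
        (LaurentSeries (IsLocalRing.ResidueField R))
        ⟨PowerSeries.X, Submonoid.mem_powers _⟩).pow m)

theorem psi_algebraMap (f : PowerSeries R) :
    psi R (algebraMap (PowerSeries R) (Localization.Away (PowerSeries.X : PowerSeries R)) f) =
      algebraMap _ _ (PowerSeries.map (IsLocalRing.residue R) f) :=
  IsLocalization.lift_eq _ _

theorem psi_surjective : Function.Surjective (psi R) := by
  intro y
  obtain ⟨⟨f, s⟩, hys⟩ := IsLocalization.surj
    (M := Submonoid.powers (PowerSeries.X : PowerSeries (IsLocalRing.ResidueField R))) y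
  obtain ⟨f', hf'⟩ := residue_map_surjective R f
  obtain ⟨m, hm⟩ := s.2
  have hv : IsUnit (algebraMap (PowerSeries R)
      (Localization.Away (PowerSeries.X : PowerSeries R)) (PowerSeries.X ^ m)) :=
    IsLocalization.map_units (M := Submonoid.powers (PowerSeries.X : PowerSeries R)) _
      ⟨PowerSeries.X ^ m, ⟨m, rfl⟩⟩
  have hpow : psi R (algebraMap (PowerSeries R) (Localization.Away (PowerSeries.X : PowerSeries R)) (PowerSeries.X ^ m)) =
      algebraMap (PowerSeries (IsLocalRing.ResidueField R)) _ ↑s := by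
    rw [psi_algebraMap]
    refine congrArg _ ?_
    rw [map_pow, PowerSeries.map_X]
    exact hm
  refine ⟨algebraMap (PowerSeries R) (Localization.Away (PowerSeries.X : PowerSeries R)) f' * ↑hv.unit⁻¹, ?_⟩
  rw [map_mul, psi_algebraMap, hf']
  have h1 : psi R ↑hv.unit⁻¹ * psi R (algebraMap (PowerSeries R) (Localization.Away (PowerSeries.X : PowerSeries R)) (PowerSeries.X ^ m)) = 1 := by
    rw [← map_mul]
    have h2 : (↑hv.unit⁻¹ : Localization.Away (PowerSeries.X : PowerSeries R)) *
        algebraMap (PowerSeries R) (Localization.Away (PowerSeries.X : PowerSeries R)) (PowerSeries.X ^ m) = 1 := by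
      exact IsUnit.val_inv_mul hv
    rw [h2, map_one]
  calc algebraMap (PowerSeries (IsLocalRing.ResidueField R)) (LaurentSeries (IsLocalRing.ResidueField R)) f * psi R ↑hv.unit⁻¹
      = y * algebraMap (PowerSeries (IsLocalRing.ResidueField R)) _ ↑s * psi R ↑hv.unit⁻¹ := by
        rw [hys]
    _ = y * (psi R ↑hv.unit⁻¹ * psi R (algebraMap (PowerSeries R) (Localization.Away (PowerSeries.X : PowerSeries R)) (PowerSeries.X ^ m))) := by
        rw [hpow]; ring
    _ = y := by rw [h1, mul_one]

theorem psi_ker (π : R) (hπ : Irreducible π) :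
    RingHom.ker (psi R) = Ideal.span
      {algebraMap (PowerSeries R) (Localization.Away (PowerSeries.X : PowerSeries R))
        (PowerSeries.C π)} := by
  ext x
  rw [RingHom.mem_ker]
  constructor
  · intro hx
    obtain ⟨⟨f, s⟩, hxs⟩ := IsLocalization.surj
      (M := Submonoid.powers (PowerSeries.X : PowerSeries R)) x
    have h1 : algebraMap (PowerSeries (IsLocalRing.ResidueField R))
        (LaurentSeries (IsLocalRing.ResidueField R))
        (PowerSeries.map (IsLocalRing.residue R) f) = 0 := by
      rw [← psi_algebraMap, ← hxs, map_mul, hx, zero_mul]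
    have h2 : PowerSeries.map (IsLocalRing.residue R) f = 0 := by
      have hinj : Function.Injective (algebraMap
          (PowerSeries (IsLocalRing.ResidueField R))
          (LaurentSeries (IsLocalRing.ResidueField R))) := by
        rw [LaurentSeries.coe_algebraMap]
        exact HahnSeries.ofPowerSeries_injective
      exact hinj (by rw [h1, map_zero])
    have h3 : ∀ n, ∃ c, PowerSeries.coeff n f = π * c := by
      intro n
      have h4 : IsLocalRing.residue R (PowerSeries.coeff n f) = 0 := by
        have h5 := congrArg (PowerSeries.coeff n) h2
        rwa [PowerSeries.coeff_map, map_zero] at h5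
      have h5 : PowerSeries.coeff n f ∈ IsLocalRing.maximalIdeal R :=
        Ideal.Quotient.eq_zero_iff_mem.mp h4
      rw [hπ.maximalIdeal_eq, Ideal.mem_span_singleton] at h5
      obtain ⟨c, hc⟩ := h5
      exact ⟨c, hc⟩
    choose c hc using h3
    have hf : f = PowerSeries.C π * PowerSeries.mk c := by
      ext n
      rw [PowerSeries.coeff_C_mul, PowerSeries.coeff_mk, hc]
    have hv : IsUnit (algebraMap (PowerSeries R)
        (Localization.Away (PowerSeries.X : PowerSeries R)) ↑s) :=
      IsLocalization.map_units _ s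
    rw [Ideal.mem_span_singleton]
    refine ⟨algebraMap (PowerSeries R) (Localization.Away (PowerSeries.X : PowerSeries R)) (PowerSeries.mk c) * ↑hv.unit⁻¹, ?_⟩
    have h6 : x * ↑hv.unit = algebraMap (PowerSeries R) (Localization.Away (PowerSeries.X : PowerSeries R)) f := by rw [IsUnit.unit_spec]; exact hxs
    calc x = x * ↑hv.unit * ↑hv.unit⁻¹ := by rw [mul_assoc, Units.mul_inv, mul_one]
      _ = algebraMap (PowerSeries R) (Localization.Away (PowerSeries.X : PowerSeries R)) f * ↑hv.unit⁻¹ := by rw [h6]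
      _ = _ := by rw [hf, map_mul]; ring
  · intro hx
    rw [Ideal.mem_span_singleton] at hx
    obtain ⟨d, rfl⟩ := hx
    have hres : IsLocalRing.residue R π = 0 :=
      Ideal.Quotient.eq_zero_iff_mem.mpr
        (by rw [hπ.maximalIdeal_eq]; exact Ideal.mem_span_singleton_self _)
    rw [map_mul, psi_algebraMap, PowerSeries.map_C, hres, map_zero, map_zero, zero_mul]

theorem laurentLoc_isDomain :
    IsDomain (Localization.Away (PowerSeries.X : PowerSeries R)) :=
  IsLocalization.isDomain_localization
    (powers_le_nonZeroDivisors_of_noZeroDivisors PowerSeries.X_ne_zero)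

theorem piImage_ne_zero (π : R) (hπ : Irreducible π) :
    algebraMap (PowerSeries R) (Localization.Away (PowerSeries.X : PowerSeries R))
      (PowerSeries.C π) ≠ 0 := by
  intro h
  have hinj : Function.Injective (algebraMap (PowerSeries R)
      (Localization.Away (PowerSeries.X : PowerSeries R))) :=
    IsLocalization.injective _
      (powers_le_nonZeroDivisors_of_noZeroDivisors PowerSeries.X_ne_zero)
  have hC : PowerSeries.C π = 0 := hinj (by rw [h, map_zero])
  have := congrArg (PowerSeries.coeff 0) hC
  rw [PowerSeries.coeff_zero_C, map_zero] at this
  exact hπ.ne_zero this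

/-- `T ⧸ (π) ≃+* k((u))`. -/
noncomputable def quotLaurentEquiv (π : R) (hπ : Irreducible π) :
    (Localization.Away (PowerSeries.X : PowerSeries R) ⧸
      (Ideal.span {algebraMap (PowerSeries R)
        (Localization.Away (PowerSeries.X : PowerSeries R)) (PowerSeries.C π)})) ≃+*
      LaurentSeries (IsLocalRing.ResidueField R) :=
  (Ideal.quotEquivOfEq (psi_ker R π hπ).symm).trans
    (RingHom.quotientKerEquivOfSurjective (psi_surjective R))

theorem span_piImage_isMaximal (π : R) (hπ : Irreducible π) :
    (Ideal.span {algebraMap (PowerSeries R)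
      (Localization.Away (PowerSeries.X : PowerSeries R))
      (PowerSeries.C π)}).IsMaximal :=
  Ideal.Quotient.maximal_of_isField _
    (MulEquiv.isField (Field.toIsField _) (quotLaurentEquiv R π hπ).toMulEquiv)

end Laurent
end Stmt8Aux

/-- If `R` is a complete discrete valuation ring with uniformizer `π` and residue field
`k`, then the `π`-adic completion `A` of `R[[u]][1/u]` is a complete discrete valuation
ring whose maximal ideal is generated by the image of `π`, and `A/πA ≅ k((u))`. -/
theorem stmt_8 [IsAdicComplete (maximalIdeal R) R] (π : R) (hπ : Irreducible π) :
    (∃ hd : IsDomain (piAdicCompletion R π), @IsDiscreteValuationRing _ _ hd) ∧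
    (∃ hl : IsLocalRing (piAdicCompletion R π),
      @maximalIdeal _ _ hl = Ideal.span
        {algebraMap (laurentLoc R) (piAdicCompletion R π) (piImage R π)}) ∧
    IsAdicComplete
      (Ideal.span {algebraMap (laurentLoc R) (piAdicCompletion R π) (piImage R π)})
      (piAdicCompletion R π) ∧
    Nonempty
      ((piAdicCompletion R π ⧸
          Ideal.span {algebraMap (laurentLoc R) (piAdicCompletion R π) (piImage R π)})
        ≃+* LaurentSeries (ResidueField R)) := by
  classical
  letI hdT : IsDomain (laurentLoc R) := Stmt8Aux.laurentLoc_isDomain R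
  have hp : (piImage R π) ≠ 0 := Stmt8Aux.piImage_ne_zero R π hπ
  have hmax : (Ideal.span {piImage R π}).IsMaximal := Stmt8Aux.span_piImage_isMaximal R π hπ
  exact ⟨⟨Stmt8Aux.completion_isDomain hp hmax, Stmt8Aux.completion_dvr hp hmax⟩,
    ⟨Stmt8Aux.completion_isLocal hp hmax, Stmt8Aux.completion_maximalIdeal_eq hp hmax⟩,
    Stmt8Aux.isAdicComplete_completion hp,
    ⟨(Stmt8Aux.quotEquiv _ hp).trans (Stmt8Aux.quotLaurentEquiv R π hπ)⟩⟩
end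

section
/- Let B be a discrete valuation ring. Let A be a discrete valuation ring which is a B-algebra such that the structure map B → A is an injective local ring homomorphism and the image of a uniformizer of B generates the maximal ideal of A (A is unramified over B). Let C be a discrete valuation ring which is a B-algebra, finite and free as a B-module, such that B → C is an injective local ring homomorphism inducing an isomorphism on residue fields (C is totally ramified over B). Then A ⊗_B C is a discrete valuation ring, its maximal ideal is generated by the image of a uniformizer of C, and its residue field is isomorphic to the residue field of A. -/
open IsLocalRing TensorProduct

private lemma stmt9_exists_least {P : ℕ → Prop} (h : ∃ n, P n) : ∃ n, P n ∧ ∀ m < n, ¬ P m := by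
  classical
  exact ⟨Nat.find h, Nat.find_spec h, fun m hm => Nat.find_min h hm⟩

set_option maxHeartbeats 1600000 in
/-- If `A` is an unramified extension of a DVR `B` (injective local map, with a uniformizer
of `B` generating the maximal ideal of `A`) and `C` is a totally ramified extension of `B`
(finite free, injective local map inducing an isomorphism on residue fields), then
`A ⊗[B] C` is a DVR whose maximal ideal is generated by the image of a uniformizer of `C`,
with residue field that of `A`. -/
theorem stmt_9 (B A C : Type*) [CommRing B] [IsDomain B] [IsDiscreteValuationRing B]
    [CommRing A] [IsDomain A] [IsDiscreteValuationRing A]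
    [CommRing C] [IsDomain C] [IsDiscreteValuationRing C]
    [Algebra B A] [Algebra B C]
    (hAinj : Function.Injective (algebraMap B A)) [IsLocalHom (algebraMap B A)]
    (πB : B) (hπB : Irreducible πB)
    (hunram : maximalIdeal A = Ideal.span {algebraMap B A πB})
    [Module.Finite B C] [Module.Free B C]
    (hCinj : Function.Injective (algebraMap B C)) [IsLocalHom (algebraMap B C)]
    (hres : Function.Bijective (ResidueField.map (algebraMap B C)))
    (πC : C) (hπC : Irreducible πC) :
    (∃ hd : IsDomain (A ⊗[B] C), @IsDiscreteValuationRing _ _ hd) ∧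
    ∃ hl : IsLocalRing (A ⊗[B] C),
      @maximalIdeal _ _ hl
          = Ideal.span {(Algebra.TensorProduct.includeRight πC : A ⊗[B] C)} ∧
      Nonempty (@ResidueField _ _ hl ≃+* ResidueField A) := by
  classical
  set R := A ⊗[B] C with hR
  set ϖ : R := Algebra.TensorProduct.includeRight πC with hϖdef
  set J : Ideal R := Ideal.span {ϖ} with hJdef
  have hmC : maximalIdeal C = Ideal.span {πC} :=
    (IsDiscreteValuationRing.irreducible_iff_uniformizer πC).mp hπC
  -- `includeRight : C → R` is injective
  have hincl : Function.Injective (fun c : C => ((1 : A) ⊗ₜ[B] c : R)) := by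
    have h1 : Function.Injective
        (LinearMap.rTensor C (Algebra.linearMap B A)) :=
      Module.Flat.rTensor_preserves_injective_linearMap _ hAinj
    have h2 := h1.comp (TensorProduct.lid B C).symm.injective
    have : (fun c : C => ((1 : A) ⊗ₜ[B] c : R)) =
        (LinearMap.rTensor C (Algebra.linearMap B A)) ∘ (TensorProduct.lid B C).symm := by
      funext c; simp
    rw [this]; exact h2
  haveI : Nontrivial R := by
    refine ⟨(1 : A) ⊗ₜ[B] (1 : C), 0, fun h => ?_⟩
    have : (1 : C) = 0 := hincl (by simpa using h)
    exact one_ne_zero this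
  haveI : IsNoetherianRing R := Algebra.FiniteType.isNoetherianRing A R
  -- image of πB in C lies in (πC), with unit * power factorization
  have hπBC0 : algebraMap B C πB ≠ 0 := fun h => hπB.ne_zero (hCinj (by simpa using h))
  obtain ⟨e, u, hue⟩ := IsDiscreteValuationRing.eq_unit_mul_pow_irreducible hπBC0 hπC
  -- key identity : algebraMap B R πB = 1 ⊗ₜ algebraMap B C πB
  have hkey : ∀ b : B, (algebraMap B R b) = (1 : A) ⊗ₜ[B] (algebraMap B C b) := by
    intro b
    rw [Algebra.TensorProduct.algebraMap_apply, Algebra.algebraMap_eq_smul_one,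
      Algebra.algebraMap_eq_smul_one (A := C), TensorProduct.smul_tmul]
  have htmulmul : ∀ (a : A) (c : C), ((1 : A) ⊗ₜ[B] (c * πC) : R) = ((1:A) ⊗ₜ[B] c) * ϖ := by
    intro a c
    rw [hϖdef]
    show (1 : A) ⊗ₜ[B] (c * πC) = ((1:A) ⊗ₜ[B] c) * ((1:A) ⊗ₜ[B] πC)
    rw [Algebra.TensorProduct.tmul_mul_tmul, one_mul]
  have hπBR : algebraMap B R πB = ((1 : A) ⊗ₜ[B] (u : C)) * ϖ ^ e := by
    rw [hkey, hue]
    show (Algebra.TensorProduct.includeRight ((u : C) * πC ^ e) : R) = _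
    rw [map_mul, map_pow]
    rfl
  -- J ≠ ⊤, via Nakayama
  have hπAm : algebraMap B A πB ∈ maximalIdeal A := by
    rw [hunram]; exact Ideal.mem_span_singleton_self _
  have hJne : J ≠ ⊤ := by
    intro hJ
    have hϖu : IsUnit ϖ := by
      rwa [hJdef, Ideal.span_singleton_eq_top] at hJ
    have huu : IsUnit ((1 : A) ⊗ₜ[B] (u : C) : R) := by
      have : ((1 : A) ⊗ₜ[B] (u : C) : R) = Algebra.TensorProduct.includeRight (u : C) := rfl
      rw [this]
      exact u.isUnit.map _
    have hunit : IsUnit (algebraMap B R πB) := by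
      rw [hπBR]; exact huu.mul (hϖu.pow e)
    have hunit' : IsUnit (algebraMap A R (algebraMap B A πB)) := by
      rwa [← IsScalarTower.algebraMap_apply]
    obtain ⟨v, hv⟩ := hunit'
    have htop : (⊤ : Submodule A R) ≤ (maximalIdeal A) • (⊤ : Submodule A R) := by
      intro x _
      have hx : x = (algebraMap B A πB) • (x * (v⁻¹ : Rˣ)) := by
        rw [Algebra.smul_def, ← hv]
        rw [show ((v : R)) * (x * ((v⁻¹ : Rˣ) : R)) = x * ((v : R) * ((v⁻¹ : Rˣ) : R)) from by ring]
        simp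
      rw [hx]
      exact Submodule.smul_mem_smul hπAm Submodule.mem_top
    have hbot : (⊤ : Submodule A R) = ⊥ :=
      Submodule.eq_bot_of_le_smul_of_le_jacobson_bot (maximalIdeal A) ⊤
        (Module.Finite.fg_top (R := A) (M := R)) htop
        (by rw [IsLocalRing.jacobson_eq_maximalIdeal ⊥ bot_ne_top])
    have : (1 : R) = 0 := by
      have h1 : (1 : R) ∈ (⊤ : Submodule A R) := Submodule.mem_top
      rwa [hbot, Submodule.mem_bot] at h1
    exact one_ne_zero this
  -- the map θ : A → R ⧸ J
  set θ : A →+* R ⧸ J := (Ideal.Quotient.mk J).comp (algebraMap A R) with hθdef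
  -- surjectivity of θ
  let eres : ResidueField B ≃+* ResidueField C :=
    RingEquiv.ofBijective (ResidueField.map (algebraMap B C)) hres
  have happrox : ∀ c : C, ∃ b : B, c - algebraMap B C b ∈ Ideal.span {πC} := by
    intro c
    obtain ⟨b, hb⟩ := Ideal.Quotient.mk_surjective (I := maximalIdeal B)
      (eres.symm (IsLocalRing.residue C c))
    refine ⟨b, ?_⟩
    rw [← hmC]
    have : IsLocalRing.residue C (algebraMap B C b) = IsLocalRing.residue C c := by
      have h1 : IsLocalRing.residue C (algebraMap B C b)
          = ResidueField.map (algebraMap B C) (IsLocalRing.residue B b) :=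
        (ResidueField.map_residue (algebraMap B C) b).symm
      rw [h1]
      have : IsLocalRing.residue B b = eres.symm (IsLocalRing.residue C c) := hb
      rw [this]
      exact eres.apply_symm_apply _
    have h0 : IsLocalRing.residue C (c - algebraMap B C b) = 0 := by
      rw [map_sub, this, sub_self]
    exact (Ideal.Quotient.eq_zero_iff_mem).mp h0
  have hsurj : Function.Surjective θ := by
    intro z
    obtain ⟨x, rfl⟩ := Ideal.Quotient.mk_surjective z
    induction x using TensorProduct.induction_on with
    | zero => exact ⟨0, by simp⟩
    | tmul a c =>
        obtain ⟨b, hb⟩ := happrox c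
        obtain ⟨d, hd⟩ := Ideal.mem_span_singleton'.mp hb
        refine ⟨algebraMap B A b * a, ?_⟩
        have hsplit : (a ⊗ₜ[B] c : R)
            = algebraMap A R (algebraMap B A b * a) + (a ⊗ₜ[B] d) * ϖ := by
          have h1 : (a ⊗ₜ[B] d) * ϖ = a ⊗ₜ[B] (d * πC) := by
            rw [hϖdef]
            show (a ⊗ₜ[B] d) * ((1:A) ⊗ₜ[B] πC) = _
            rw [Algebra.TensorProduct.tmul_mul_tmul, mul_one]
          have h2 : algebraMap A R (algebraMap B A b * a) = a ⊗ₜ[B] (algebraMap B C b) := by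
            rw [Algebra.TensorProduct.algebraMap_apply, ← Algebra.smul_def]
            simp only [Algebra.algebraMap_self, RingHom.id_apply]
            rw [TensorProduct.smul_tmul, ← Algebra.algebraMap_eq_smul_one]
          rw [h1, h2, ← TensorProduct.tmul_add, hd,
            show algebraMap B C b + (c - algebraMap B C b) = c from by ring]
        rw [hθdef]
        show Ideal.Quotient.mk J (algebraMap A R (algebraMap B A b * a)) = _
        rw [hsplit, map_add]
        have : Ideal.Quotient.mk J ((a ⊗ₜ[B] d) * ϖ) = 0 := by
          rw [Ideal.Quotient.eq_zero_iff_mem]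
          exact Ideal.mul_mem_left _ _ (Ideal.mem_span_singleton_self _)
        rw [this, add_zero]
    | add x y hx hy =>
        obtain ⟨a1, h1⟩ := hx
        obtain ⟨a2, h2⟩ := hy
        exact ⟨a1 + a2, by rw [map_add, map_add, h1, h2]⟩
  -- kernel of θ
  have hker : RingHom.ker θ = maximalIdeal A := by
    ext a
    rw [RingHom.mem_ker, hθdef, RingHom.comp_apply, Ideal.Quotient.eq_zero_iff_mem]
    constructor
    · intro h
      by_contra ha
      have hu : IsUnit a := IsLocalRing.notMem_maximalIdeal.mp ha
      exact hJne (Ideal.eq_top_of_isUnit_mem J h (hu.map _))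
    · intro h
      rw [hunram] at h
      obtain ⟨t, ht⟩ := Ideal.mem_span_singleton'.mp h
      rw [← ht, map_mul]
      apply Ideal.mul_mem_left
      rw [← IsScalarTower.algebraMap_apply, hπBR]
      have hπBCu : ¬IsUnit (algebraMap B C πB) :=
        fun h => hπB.not_isUnit (isUnit_of_map_unit (algebraMap B C) πB h)
      have he : 0 < e := Nat.pos_of_ne_zero (fun h => hπBCu
        (by rw [hue, h, pow_zero, mul_one]; exact u.isUnit))
      exact Ideal.mul_mem_left _ _ (Ideal.pow_mem_of_mem J (Ideal.mem_span_singleton_self _) e he)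
  -- R ⧸ J is a field, isomorphic to the residue field of A
  have equivKA : ResidueField A ≃+* R ⧸ J :=
    (Ideal.quotEquivOfEq hker.symm).trans (RingHom.quotientKerEquivOfSurjective hsurj)
  have hfield : IsField (R ⧸ J) :=
    MulEquiv.isField (Field.toIsField (ResidueField A)) equivKA.symm.toMulEquiv
  have Jmax : J.IsMaximal := Ideal.Quotient.maximal_of_isField J hfield
  -- every maximal ideal of R equals J
  haveI : Algebra.IsIntegral A R := Algebra.IsIntegral.of_finite A R
  have huniq : ∀ M : Ideal R, M.IsMaximal → M = J := by
    intro M hM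
    haveI := hM
    have hcm : (M.comap (algebraMap A R)).IsMaximal :=
      Ideal.isMaximal_comap_of_isIntegral_of_isMaximal M
    have hceq : M.comap (algebraMap A R) = maximalIdeal A := IsLocalRing.eq_maximalIdeal hcm
    have hπAM : algebraMap A R (algebraMap B A πB) ∈ M := by
      have : algebraMap B A πB ∈ M.comap (algebraMap A R) := by rw [hceq]; exact hπAm
      exact this
    have hϖeM : ϖ ^ e ∈ M := by
      rw [← IsScalarTower.algebraMap_apply, hπBR] at hπAM
      have huu : IsUnit ((1 : A) ⊗ₜ[B] (u : C) : R) := by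
        have : ((1 : A) ⊗ₜ[B] (u : C) : R) = Algebra.TensorProduct.includeRight (u : C) := rfl
        rw [this]; exact u.isUnit.map _
      obtain ⟨w, hw⟩ := huu
      have : ϖ ^ e = (w⁻¹ : Rˣ) * ((w : R) * ϖ ^ e) := by
        rw [← mul_assoc, ← Units.val_mul, inv_mul_cancel, Units.val_one, one_mul]
      rw [this, hw]
      exact Ideal.mul_mem_left _ _ hπAM
    have hϖM : ϖ ∈ M := hM.isPrime.mem_of_pow_mem e hϖeM
    have hle : J ≤ M := by
      rw [hJdef, Ideal.span_le]
      intro x hx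
      rw [Set.mem_singleton_iff] at hx
      rwa [hx]
    exact (Jmax.eq_of_le hM.ne_top hle).symm
  haveI hloc : IsLocalRing R :=
    IsLocalRing.of_unique_max_ideal ⟨J, Jmax, fun I hI => huniq I hI⟩
  have hmR : maximalIdeal R = J := (IsLocalRing.eq_maximalIdeal Jmax).symm
  -- powers of ϖ are nonzero
  have hϖpow : ∀ n : ℕ, ϖ ^ n ≠ 0 := by
    intro n h
    have : (Algebra.TensorProduct.includeRight (πC ^ n) : R) = 0 := by
      rw [map_pow]; exact h
    have h0 : πC ^ n = 0 := hincl (by simpa using this)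
    exact pow_ne_zero n hπC.ne_zero h0
  -- factorization of nonzero elements
  have hfact : ∀ x : R, x ≠ 0 → ∃ n : ℕ, Associated (ϖ ^ n) x := by
    intro x hx
    have hKrull : ⨅ i : ℕ, J ^ i = ⊥ := Ideal.iInf_pow_eq_bot_of_isLocalRing J hJne
    have hex : ∃ n, x ∉ J ^ n := by
      by_contra h
      push_neg at h
      exact hx (by rw [← Submodule.mem_bot (R := R), ← hKrull]; exact Submodule.mem_iInf _ |>.mpr h)
    obtain ⟨n, hnot, hmin⟩ := stmt9_exists_least hex
    have hn1 : 1 ≤ n := by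
      rcases Nat.eq_zero_or_pos n with h0 | h1
      · exfalso; apply hnot; rw [h0, pow_zero, Ideal.one_eq_top]; exact Submodule.mem_top
      · exact h1
    have hmem : x ∈ J ^ (n - 1) := by
      by_contra h
      exact (hmin (n - 1) (Nat.sub_lt hn1 one_pos)) h
    rw [hJdef, Ideal.span_singleton_pow] at hmem
    obtain ⟨y, hy⟩ := Ideal.mem_span_singleton'.mp hmem
    have hyu : IsUnit y := by
      rw [← IsLocalRing.notMem_maximalIdeal, hmR]
      intro hyJ
      obtain ⟨z, hz⟩ := Ideal.mem_span_singleton'.mp hyJ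
      apply hnot
      rw [hJdef, Ideal.span_singleton_pow, ← Nat.succ_pred_eq_of_pos hn1]
      exact Ideal.mem_span_singleton'.mpr ⟨z, by rw [← hy, ← hz, pow_succ, Nat.pred_eq_sub_one]; ring⟩
    exact ⟨n - 1, ⟨hyu.unit, by rw [mul_comm, ← hy]; rfl⟩⟩
  -- R is a domain
  haveI : NoZeroDivisors R := by
    refine ⟨fun {x y} hxy => ?_⟩
    by_contra h
    push_neg at h
    obtain ⟨hx, hy⟩ := h
    obtain ⟨m, hm⟩ := hfact x hx
    obtain ⟨k, hk⟩ := hfact y hy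
    obtain ⟨ux, hux⟩ := hm
    obtain ⟨uy, huy⟩ := hk
    have : ϖ ^ (m + k) * ((ux : R) * (uy : R)) = 0 := by
      rw [pow_add]
      rw [show ϖ ^ m * ϖ ^ k * ((ux : R) * (uy : R))
        = (ϖ ^ m * (ux : R)) * (ϖ ^ k * (uy : R)) from by ring, hux, huy, hxy]
    have h0 : ϖ ^ (m + k) = 0 := by
      have := congrArg (fun t => t * (((ux * uy)⁻¹ : Rˣ) : R)) this
      simpa [mul_assoc, ← Units.val_mul] using this
    exact hϖpow (m + k) h0
  haveI hdom : IsDomain R := NoZeroDivisors.to_isDomain R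
  -- ϖ is irreducible
  have hϖ0 : ϖ ≠ 0 := by simpa using hϖpow 1
  have hϖnu : ¬IsUnit ϖ := by
    intro h
    exact hJne (by rw [hJdef, Ideal.span_singleton_eq_top]; exact h)
  have hirr : Irreducible ϖ := by
    refine ⟨hϖnu, fun a b hab => ?_⟩
    by_contra h
    push_neg at h
    obtain ⟨ha, hb⟩ := h
    have haJ : a ∈ J := by rw [← hmR]; exact IsLocalRing.mem_maximalIdeal a |>.mpr ha
    have hbJ : b ∈ J := by rw [← hmR]; exact IsLocalRing.mem_maximalIdeal b |>.mpr hb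
    obtain ⟨a', ha'⟩ := Ideal.mem_span_singleton'.mp haJ
    obtain ⟨b', hb'⟩ := Ideal.mem_span_singleton'.mp hbJ
    have : ϖ * (1 - a' * b' * ϖ) = 0 := by
      rw [mul_sub, mul_one,
        show ϖ * (a' * b' * ϖ) = (a' * ϖ) * (b' * ϖ) from by ring, ha', hb', ← hab]
      exact sub_self ϖ
    rcases mul_eq_zero.mp this with h1 | h2
    · exact hϖ0 h1
    · have : (1 : R) = a' * b' * ϖ := by linear_combination h2
      exact hJne (Ideal.eq_top_of_isUnit_mem J (Ideal.mul_mem_left _ _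
        (Ideal.mem_span_singleton_self _)) (this ▸ isUnit_one))
  have hdvr : IsDiscreteValuationRing R :=
    IsDiscreteValuationRing.ofHasUnitMulPowIrreducibleFactorization
      ⟨ϖ, hirr, fun {x} hx => hfact x hx⟩
  -- conclusion
  refine ⟨⟨hdom, hdvr⟩, hloc, hmR, ?_⟩
  exact ⟨(Ideal.quotEquivOfEq hmR).trans equivKA.symm⟩
end

section
/- Let L be a field of characteristic p > 0 and q = p^m with m ≥ 1. Let σ : L((t)) → L((t)) be the ring homomorphism of the Laurent series field that fixes t and raises every coefficient to the q-th power. Let R be the ring of sequences (c_n)_{n∈ℕ} of elements of L satisfying c_n = c_{n+1}^q for all n (the inverse limit of the system (L, a ↦ a^q)), which is a field. Then the ring of sequences (f_n)_{n∈ℕ} of elements of L((t)) satisfying f_n = σ(f_{n+1}) for all n (the inverse limit of the system (L((t)), σ)) is isomorphic as a ring to the Laurent series field R((t)). -/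
private def mapRingHomAux {R S : Type*} [CommRing R] [CommRing S]
    (f : R →+* S) : LaurentSeries R →+* LaurentSeries S where
  toFun x := x.map f
  map_one' := HahnSeries.map_one f.toMonoidWithZeroHom
  map_mul' x y := HahnSeries.map_mul (f : R →ₙ+* S)
  map_zero' := HahnSeries.map_zero (f : ZeroHom R S)
  map_add' x y := HahnSeries.map_add (f : R →+ S)

set_option synthInstance.maxHeartbeats 400000

private lemma pow_seq_aux {M : Type*} [Monoid M] (q : ℕ) (c : ℕ → M)
    (h : ∀ n, c n = c (n + 1) ^ q) (n : ℕ) : c 0 = c n ^ q ^ n := by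
  induction n with
  | zero => simp
  | succ n ih => rw [ih, h n, ← pow_mul, ← pow_succ']

/-- Let `L` be a field of characteristic `p`, `q = p^m` (`m ≥ 1`), `φ : L → L` the
`q`-power Frobenius, and `σ : L((t)) → L((t))` the ring homomorphism raising each
coefficient to the `q`-th power (and fixing `t`). Let `R` be the field of sequences
`(c_n)` in `L` with `c_n = c_{n+1}^q` (the inverse limit of `(L, a ↦ a^q)`). Then the
inverse limit of the system `(L((t)), σ)`, i.e. the ring of sequences `(f_n)` in `L((t))`
with `f_n = σ(f_{n+1})`, is isomorphic as a ring to the Laurent series ring `R((t))`. -/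
theorem stmt_10 (p : ℕ) (hp : p.Prime) (L : Type*) [Field L] [CharP L p]
    (m : ℕ) (hm : 1 ≤ m) (q : ℕ) (hq : q = p ^ m)
    (φ : L →+* L) (hφ : ∀ a : L, φ a = a ^ q)
    (σ : LaurentSeries L →+* LaurentSeries L)
    (hσ : ∀ (f : LaurentSeries L) (n : ℤ), (σ f).coeff n = f.coeff n ^ q) :
    Nonempty
      ((RingHom.eqLocus (RingHom.id (ℕ → LaurentSeries L))
          (Pi.ringHom fun n => σ.comp (Pi.evalRingHom (fun _ => LaurentSeries L) (n + 1))))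
        ≃+*
       LaurentSeries (RingHom.eqLocus (RingHom.id (ℕ → L))
          (Pi.ringHom fun n => φ.comp (Pi.evalRingHom (fun _ => L) (n + 1))))) := by
  have hq0 : q ≠ 0 := hq ▸ pow_ne_zero m hp.ne_zero
  set R := RingHom.eqLocus (RingHom.id (ℕ → L))
      (Pi.ringHom fun n => φ.comp (Pi.evalRingHom (fun _ => L) (n + 1))) with hR
  set E := RingHom.eqLocus (RingHom.id (ℕ → LaurentSeries L))
      (Pi.ringHom fun n => σ.comp (Pi.evalRingHom (fun _ => LaurentSeries L) (n + 1))) with hE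
  -- membership unfoldings
  have hRmem : ∀ c : ℕ → L, c ∈ R ↔ ∀ n, c n = φ (c (n + 1)) := by
    intro c
    constructor
    · intro h n
      have : (RingHom.id (ℕ → L)) c = _ := h
      exact congrFun this n
    · intro h
      show (RingHom.id (ℕ → L)) c = _
      funext n
      exact h n
  have hEmem : ∀ F : ℕ → LaurentSeries L, F ∈ E ↔ ∀ n, F n = σ (F (n + 1)) := by
    intro F
    constructor
    · intro h n
      have : (RingHom.id (ℕ → LaurentSeries L)) F = _ := h
      exact congrFun this n
    · intro h
      show (RingHom.id (ℕ → LaurentSeries L)) F = _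
      funext n
      exact h n
  -- key: for c ∈ R, c 0 = c n ^ q ^ n
  have hRpow : ∀ (c : R) (n : ℕ), (c : ℕ → L) 0 = (c : ℕ → L) n ^ q ^ n := by
    intro c n
    refine pow_seq_aux q _ (fun k => ?_) n
    rw [(hRmem _).mp c.2 k, hφ]
  -- evaluation ring homs
  let ev : ℕ → (R →+* L) := fun n => (Pi.evalRingHom (fun _ => L) n).comp R.subtype
  let Ψ : LaurentSeries R →+* (ℕ → LaurentSeries L) :=
    Pi.ringHom fun n => mapRingHomAux (ev n)
  have hΨcoeff : ∀ (g : LaurentSeries R) (n : ℕ) (i : ℤ),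
      (Ψ g n).coeff i = ((g.coeff i : R) : ℕ → L) n := fun _ _ _ => rfl
  have hΨmem : ∀ g : LaurentSeries R, Ψ g ∈ E := by
    intro g
    rw [hEmem]
    intro n
    ext i
    rw [hσ, hΨcoeff, hΨcoeff, ← hφ, ← (hRmem _).mp (g.coeff i).2 n]
  let Ψ' : LaurentSeries R →+* E := Ψ.codRestrict E hΨmem
  have hinj : Function.Injective Ψ' := by
    rw [injective_iff_map_eq_zero]
    intro g hg
    ext i
    have h0 : (Ψ g 0).coeff i = 0 := by
      have : Ψ g = 0 := congrArg Subtype.val hg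
      rw [this]; rfl
    rw [hΨcoeff] at h0
    have hz : g.coeff i = 0 := Subtype.ext (by
      funext n
      show ((g.coeff i : R) : ℕ → L) n = 0
      have := hRpow (g.coeff i) n
      rw [h0] at this
      exact pow_eq_zero_iff (pow_ne_zero n hq0) |>.mp this.symm)
    exact congrFun (congrArg Subtype.val hz) _
  have hsurj : Function.Surjective Ψ' := by
    rintro ⟨F, hF⟩
    rw [hEmem] at hF
    have hFc : ∀ (i : ℤ) (n : ℕ), (F n).coeff i = (F (n + 1)).coeff i ^ q := by
      intro i n
      rw [hF n, hσ]
    have hFmem : ∀ i : ℤ, (fun n => (F n).coeff i) ∈ R := by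
      intro i
      rw [hRmem]
      intro n
      rw [hφ]
      exact hFc i n
    have hF0 : ∀ (i : ℤ) (n : ℕ), (F 0).coeff i = (F n).coeff i ^ q ^ n := by
      intro i n
      exact pow_seq_aux q (fun n => (F n).coeff i) (hFc i) n
    refine ⟨⟨fun i => (⟨fun n => (F n).coeff i, hFmem i⟩ : R),
      (F 0).isPWO_support.mono ?_⟩, ?_⟩
    · intro i hi
      simp only [Function.mem_support, ne_eq] at hi ⊢
      intro h0
      apply hi
      ext n
      have := hF0 i n
      rw [h0] at this
      exact pow_eq_zero_iff (pow_ne_zero n hq0) |>.mp this.symm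
    · apply Subtype.ext
      funext n
      ext i
      rfl
  exact ⟨(RingEquiv.ofBijective Ψ' ⟨hinj, hsurj⟩).symm⟩
end

section
/- Let E be a separably closed field of characteristic p > 0, q = p^m with m ≥ 1, and k = { a ∈ E : a^q = a } the subfield of q-Frobenius-fixed elements of E (a field with q elements). Let D be a finite-dimensional E-vector space and f : D → D an additive map satisfying f(a·v) = a^q·f(v) for all a ∈ E, v ∈ D, and such that the E-linear span of the image f(D) is all of D (f is étale). Then the fixed-point set D^{f=1} = { v ∈ D : f(v) = v } is a k-vector space whose dimension over k equals dim_E D, and the natural E-linear map E ⊗_k D^{f=1} → D sending a ⊗ v to a·v is bijective. -/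
open TensorProduct Polynomial

section AuxFrobLemmas

variable {E : Type*} [Field E] {q : ℕ}
variable {D : Type*} [AddCommGroup D] [Module E D]

lemma auxFrob.f_zero (f : D → D) (hadd : ∀ x y : D, f (x + y) = f x + f y) : f 0 = 0 := by
  have h := hadd 0 0
  rw [add_zero] at h
  exact (left_eq_add.mp h)

lemma auxFrob.f_sub (f : D → D) (hadd : ∀ x y : D, f (x + y) = f x + f y) (x y : D) :
    f (x - y) = f x - f y := by
  have hneg : f (-y) = - f y := by
    have h := hadd y (-y)
    rw [add_neg_cancel, auxFrob.f_zero f hadd] at h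
    linear_combination (norm := abel) -h
  rw [sub_eq_add_neg, hadd, hneg, sub_eq_add_neg]

lemma auxFrob.f_sum (f : D → D) (hadd : ∀ x y : D, f (x + y) = f x + f y)
    (hsmul : ∀ (a : E) (x : D), f (a • x) = a ^ q • f x)
    {ι : Type*} (s : Finset ι) (a : ι → E) (g : ι → D) :
    f (∑ i ∈ s, a i • g i) = ∑ i ∈ s, (a i) ^ q • f (g i) := by
  classical
  induction s using Finset.cons_induction with
  | empty => simpa using auxFrob.f_zero f hadd
  | cons i s hi ih => rw [Finset.sum_cons, hadd, ih, hsmul, Finset.sum_cons]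

lemma auxFrob.f_inj [FiniteDimensional E D] (hq0 : q ≠ 0)
    (f : D → D) (hadd : ∀ x y : D, f (x + y) = f x + f y)
    (hsmul : ∀ (a : E) (x : D), f (a • x) = a ^ q • f x)
    (hetale : Submodule.span E (Set.range f) = ⊤) {x : D} (hx : f x = 0) : x = 0 := by
  classical
  set b := Module.finBasis E D with hb
  have hsp : ∀ y : D, f y ∈ Submodule.span E (Set.range (f ∘ b)) := by
    intro y
    rw [← b.sum_repr y, auxFrob.f_sum f hadd hsmul]
    exact Submodule.sum_mem _ fun i _ =>
      Submodule.smul_mem _ _ (Submodule.subset_span ⟨i, rfl⟩)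
  have hle : ⊤ ≤ Submodule.span E (Set.range (f ∘ b)) := by
    rw [← hetale]
    refine Submodule.span_le.mpr ?_
    rintro _ ⟨y, rfl⟩
    exact hsp y
  have hind : LinearIndependent E (f ∘ b) :=
    linearIndependent_of_top_le_span_of_card_eq_finrank hle (by simp)
  have h2 : f x = ∑ i, (b.repr x i) ^ q • f (b i) := by
    conv_lhs => rw [← b.sum_repr x]
    rw [auxFrob.f_sum f hadd hsmul]
  have h3 : ∀ i, (b.repr x i) ^ q = 0 := by
    refine Fintype.linearIndependent_iff.mp hind (fun i => (b.repr x i) ^ q) ?_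
    simp only [Function.comp_apply]
    rw [← h2, hx]
  have h4 : ∀ i, b.repr x i = 0 := fun i => pow_eq_zero_iff hq0 |>.mp (h3 i)
  rw [← b.sum_repr x]
  simp [h4]


lemma auxFrob.artin_schreier [IsSepClosed E] (hqE : (q : E) = 0) (hq2 : 2 ≤ q) (c : E) :
    ∃ a : E, a ^ q - a = c := by
  set g : E[X] := X ^ q + (C (-1) * X + C (-c)) with hg
  have hder : derivative g = -1 := by
    simp [hg, derivative_X_pow, hqE]
  have hsep : g.Separable := by
    unfold Polynomial.Separable
    rw [hder]
    exact (isCoprime_one_right).neg_right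
  have hdeglin : (C (-1 : E) * X + C (-c)).natDegree < (X ^ q : E[X]).natDegree := by
    rw [natDegree_X_pow]
    calc (C (-1 : E) * X + C (-c)).natDegree ≤ 1 := natDegree_linear_le
    _ < q := by omega
  have hnd : g.natDegree = q := by
    rw [hg, natDegree_add_eq_left_of_natDegree_lt hdeglin, natDegree_X_pow]
  have hg0 : g ≠ 0 := fun h => by simp [h] at hnd; omega
  have hdeg : g.degree ≠ 0 := by
    rw [degree_eq_natDegree hg0, hnd]
    exact_mod_cast (by omega : q ≠ 0)
  obtain ⟨a, ha⟩ := IsSepClosed.exists_root g hdeg hsep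
  refine ⟨a, ?_⟩
  have := ha
  rw [IsRoot.def, hg] at this
  simp at this
  linear_combination this

lemma auxFrob.exists_ne_zero_fixed_root [IsSepClosed E] (P : E[X])
    (hd : derivative P = 0) (h0 : P.eval 0 = 0) (hdeg : 2 ≤ P.natDegree) :
    ∃ t : E, t ≠ 0 ∧ P.eval t = t := by
  set G : E[X] := P - X with hGdef
  have hGnd : G.natDegree = P.natDegree := by
    rw [hGdef, sub_eq_add_neg, natDegree_add_eq_left_of_natDegree_lt]
    rw [natDegree_neg, natDegree_X]
    omega
  have hG0 : G ≠ 0 := fun h => by simp [h] at hGnd; omega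
  have hGder : derivative G = -1 := by
    rw [hGdef, derivative_sub, hd, derivative_X, zero_sub]
  have hsep : G.Separable := by
    unfold Polynomial.Separable
    rw [hGder]
    exact (isCoprime_one_right).neg_right
  have hcoeff : G.coeff 0 = 0 := by
    rw [coeff_zero_eq_eval_zero, hGdef]
    simp [h0]
  obtain ⟨H, hH⟩ := (X_dvd_iff).mpr hcoeff
  have hHne : H ≠ 0 := by rintro rfl; rw [mul_zero] at hH; exact hG0 hH
  have hHsep : H.Separable := hsep.of_dvd (Dvd.intro_left X hH.symm)
  have hHnd : 1 + H.natDegree = G.natDegree := by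
    rw [hH, natDegree_mul X_ne_zero hHne, natDegree_X]
  have hHdeg : H.degree ≠ 0 := by
    rw [degree_eq_natDegree hHne]
    exact_mod_cast (by omega : H.natDegree ≠ 0)
  obtain ⟨t, ht⟩ := IsSepClosed.exists_root H hHdeg hHsep
  have ht0 : t ≠ 0 := by
    rintro rfl
    have hX : X ∣ H := (X_dvd_iff).mpr (by rw [coeff_zero_eq_eval_zero]; exact ht)
    obtain ⟨H', rfl⟩ := hX
    have : ¬ IsUnit (X : E[X]) := Polynomial.not_isUnit_X
    exact this (hsep.squarefree X ⟨H', by rw [hH]; ring⟩)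
  refine ⟨t, ht0, ?_⟩
  have hGt : G.eval t = 0 := by rw [hH]; simp [ht.eq_zero]
  have h2 : P.eval t - t = 0 := by
    rw [← hGt, hGdef]; simp
  linear_combination h2

lemma auxFrob.exists_fixed [IsSepClosed E] [FiniteDimensional E D] [Nontrivial D]
    (hqE : (q : E) = 0) (hq2 : 2 ≤ q)
    (f : D → D) (hadd : ∀ x y : D, f (x + y) = f x + f y)
    (hsmul : ∀ (a : E) (x : D), f (a • x) = a ^ q • f x)
    (hetale : Submodule.span E (Set.range f) = ⊤) :
    ∃ x : D, x ≠ 0 ∧ f x = x := by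
  classical
  have hq0 : q ≠ 0 := by omega
  obtain ⟨v, hv⟩ := exists_ne (0 : D)
  have hinj : ∀ x : D, f x = 0 → x = 0 := fun x hx =>
    auxFrob.f_inj hq0 f hadd hsmul hetale hx
  have hitne : ∀ i : ℕ, f^[i] v ≠ 0 := by
    intro i
    induction i with
    | zero => simpa using hv
    | succ n ih =>
      rw [Function.iterate_succ_apply']
      exact fun h => ih (hinj _ h)
  -- the decreasing chain of spans of tails of iterates
  set T : ℕ → Submodule E D :=
    fun j => Submodule.span E (Set.range fun i : ℕ => f^[i + j] v) with hT
  have hTanti : ∀ j, T (j + 1) ≤ T j := by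
    intro j
    refine Submodule.span_le.mpr ?_
    rintro _ ⟨i, rfl⟩
    show f^[i + (j + 1)] v ∈ (T j : Set D)
    have : i + (j + 1) = (i + 1) + j := by omega
    rw [this]
    exact Submodule.subset_span ⟨i + 1, rfl⟩
  have hex : ∃ j : ℕ, T (j + 2) = T (j + 1) := by
    by_contra hc
    push_neg at hc
    have hlt : ∀ j, Module.finrank E (T (j + 2)) < Module.finrank E (T (j + 1)) := fun j =>
      Submodule.finrank_lt_finrank_of_lt (lt_of_le_of_ne (hTanti _) (hc j))
    have hmono : ∀ j, Module.finrank E (T (j + 1)) + j ≤ Module.finrank E (T 1) := by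
      intro j
      induction j with
      | zero => show Module.finrank E (T 1) + 0 ≤ _; omega
      | succ n ih =>
        have h1 := hlt n
        show Module.finrank E (T (n + 2)) + (n + 1) ≤ _
        omega
    have := hmono (Module.finrank E (T 1) + 1)
    omega
  obtain ⟨s0, hs⟩ := hex
  set s : ℕ := s0 + 1 with hsdef
  set w : D := f^[s] v with hwdef
  have hw : w ≠ 0 := hitne s
  set u : ℕ → D := fun i => f^[i + 1] w with hudef
  have hu : ∀ i, f (u i) = u (i + 1) := by
    intro i
    exact (Function.iterate_succ_apply' f (i + 1) w).symm
  have hu0 : u 0 = f w := by simp [hudef]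
  have hfun : (fun i : ℕ => f^[i + (s + 1)] v) = u := by
    funext i
    show f^[i + (s + 1)] v = f^[i + 1] w
    rw [hwdef, ← Function.iterate_add_apply]
    congr 1
    omega
  have hT2 : T (s + 1) = Submodule.span E (Set.range u) := by
    show Submodule.span E (Set.range fun i : ℕ => f^[i + (s + 1)] v) = _
    rw [hfun]
  have hwT : w ∈ T s := by
    rw [hT]
    exact Submodule.subset_span ⟨0, by simp [hwdef]⟩
  have hwmem : w ∈ Submodule.span E (Set.range u) := by
    rw [← hT2]
    have : T (s + 1) = T s := hs
    rw [this]
    exact hwT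
  -- the increasing chain of spans of initial segments
  set U : ℕ → Submodule E D :=
    fun j => Submodule.span E (Set.range fun i : Fin j => u i) with hU
  have hsnoc : ∀ n : ℕ, (fun i : Fin (n + 1) => u i) = Fin.snoc (fun i : Fin n => u i) (u n) := by
    intro n
    funext i
    refine Fin.lastCases ?_ ?_ i
    · rw [Fin.snoc_last]; rfl
    · intro k; rw [Fin.snoc_castSucc]; rfl
  have hUex : ∃ j, u j ∈ U j := by
    by_contra hc
    push_neg at hc
    have hli : ∀ j : ℕ, LinearIndependent E (fun i : Fin j => u i) := by
      intro j
      induction j with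
      | zero => exact linearIndependent_empty_type
      | succ n ih =>
        rw [hsnoc n, linearIndependent_fin_snoc]
        exact ⟨ih, hc n⟩
    have hcard := (hli (Module.finrank E D + 1)).fintype_card_le_finrank
    simp at hcard
  set r : ℕ := Nat.find hUex with hrdef
  have hur : u r ∈ U r := Nat.find_spec hUex
  have hmin : ∀ j, j < r → u j ∉ U j := fun j hj => Nat.find_min hUex hj
  have hliR : LinearIndependent E (fun i : Fin r => u i) := by
    have key : ∀ j, j ≤ r → LinearIndependent E (fun i : Fin j => u i) := by
      intro j
      induction j with
      | zero => intro _; exact linearIndependent_empty_type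
      | succ n ih =>
        intro hn
        rw [hsnoc n, linearIndependent_fin_snoc]
        exact ⟨ih (by omega), hmin n (by omega)⟩
    exact key r le_rfl
  have hr0 : 0 < r := by
    rcases Nat.eq_zero_or_pos r with h | h
    · exfalso
      rw [h] at hur
      have hu00 : u 0 = 0 := by
        have : U 0 = ⊥ := by
          rw [hU]
          simp
        rw [this] at hur
        simpa using hur
      exact hw (hinj w (by rw [← hu0, hu00]))
    · exact h
  obtain ⟨r0, hr01⟩ : ∃ r0, r = r0 + 1 := ⟨r - 1, by omega⟩
  rw [hr01] at hur hliR
  have hliN : ∀ a : ℕ → E, (∑ j ∈ Finset.range (r0 + 1), a j • u j) = 0 →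
      ∀ j, j < r0 + 1 → a j = 0 := by
    intro a ha j hj
    have h1 : ∑ i : Fin (r0 + 1), a i • u i = 0 := by
      rw [← Finset.sum_range (fun j => a j • u j)]
      exact ha
    exact Fintype.linearIndependent_iff.mp hliR (fun i => a i) h1 ⟨j, hj⟩
  obtain ⟨B', hB'⟩ := (Submodule.mem_span_range_iff_exists_fun _).mp hur
  set B : ℕ → E := fun j => if h : j < r0 + 1 then B' ⟨j, h⟩ else 0 with hBdef
  have hB : ∑ j ∈ Finset.range (r0 + 1), B j • u j = u (r0 + 1) := by
    rw [Finset.sum_range (fun j => B j • u j), ← hB']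
    refine Finset.sum_congr rfl fun i _ => ?_
    congr 1
    simp [hBdef, i.isLt, Nat.not_lt.mpr (Nat.lt_succ_iff.mp i.isLt)]
  have hUR : ∀ i : ℕ, u i ∈ U (r0 + 1) := by
    intro i
    induction i with
    | zero => exact Submodule.subset_span ⟨⟨0, by omega⟩, rfl⟩
    | succ n ih =>
      obtain ⟨c', hc'⟩ := (Submodule.mem_span_range_iff_exists_fun _).mp ih
      have hstep : u (n + 1) = ∑ i : Fin (r0 + 1), (c' i) ^ q • u (↑i + 1) := by
        rw [← hu n, ← hc', auxFrob.f_sum f hadd hsmul]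
        exact Finset.sum_congr rfl fun i _ => by rw [hu]
      rw [hstep]
      refine Submodule.sum_mem _ fun i _ => Submodule.smul_mem _ _ ?_
      rcases Nat.lt_or_ge (↑i + 1) (r0 + 1) with h | h
      · exact Submodule.subset_span ⟨⟨↑i + 1, h⟩, rfl⟩
      · have hh : (↑i : ℕ) + 1 = r0 + 1 := by omega
        rw [hh]
        exact hur
  have hwU : w ∈ U (r0 + 1) := by
    have hle : Submodule.span E (Set.range u) ≤ U (r0 + 1) :=
      Submodule.span_le.mpr (by rintro _ ⟨i, rfl⟩; exact hUR i)
    exact hle hwmem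
  obtain ⟨c', hc'⟩ := (Submodule.mem_span_range_iff_exists_fun _).mp hwU
  set c : ℕ → E := fun j => if h : j < r0 + 1 then c' ⟨j, h⟩ else 0 with hcdef
  have hc : ∑ j ∈ Finset.range (r0 + 1), c j • u j = w := by
    rw [Finset.sum_range (fun j => c j • u j), ← hc']
    refine Finset.sum_congr rfl fun i _ => ?_
    congr 1
    simp [hcdef, i.isLt, Nat.not_lt.mpr (Nat.lt_succ_iff.mp i.isLt)]
  have hfw : u 0 = (∑ j ∈ Finset.range r0, (c j) ^ q • u (j + 1)) + (c r0) ^ q • u (r0 + 1) := by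
    rw [hu0, ← hc, auxFrob.f_sum f hadd hsmul]
    rw [Finset.sum_congr rfl (fun j _ => by rw [hu] : ∀ j ∈ Finset.range (r0+1), (c j) ^ q • f (u j) = (c j) ^ q • u (j + 1))]
    exact Finset.sum_range_succ _ _
  have hB0 : B 0 ≠ 0 := by
    intro hB00
    have hnot := hliR.notMem_span_image
      (s := {i : Fin (r0 + 1) | i ≠ 0}) (x := (0 : Fin (r0 + 1))) (by simp)
    apply hnot
    have hmem1 : ∀ j, j < r0 →
        u (j + 1) ∈ Submodule.span E ((fun i : Fin (r0 + 1) => u ↑i) '' {i | i ≠ 0}) := by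
      intro j hj
      refine Submodule.subset_span ⟨⟨j + 1, by omega⟩, ?_, rfl⟩
      intro h
      have := congrArg Fin.val h
      simp only [Fin.val_zero, Fin.val_mk] at this
      omega
    have hsum2 : u (r0 + 1) = ∑ j ∈ Finset.range r0, B (j + 1) • u (j + 1) := by
      rw [← hB, Finset.sum_range_succ', hB00, zero_smul, add_zero]
    show u 0 ∈ _
    rw [hfw, hsum2]
    refine Submodule.add_mem _
      (Submodule.sum_mem _ fun j hj => Submodule.smul_mem _ _ (hmem1 j (Finset.mem_range.mp hj)))
      (Submodule.smul_mem _ _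
        (Submodule.sum_mem _ fun j hj => Submodule.smul_mem _ _ (hmem1 j (Finset.mem_range.mp hj))))
  -- the polynomial whose root gives the fixed vector
  set P : ℕ → E[X] :=
    fun n => Nat.rec (C (B 0) * X ^ q) (fun n Pn => Pn ^ q + C (B (n + 1)) * X ^ q) n with hPdef
  have hP0 : P 0 = C (B 0) * X ^ q := rfl
  have hPs : ∀ n, P (n + 1) = P n ^ q + C (B (n + 1)) * X ^ q := fun n => rfl
  have hPder : ∀ n, derivative (P n) = 0 := by
    intro n
    induction n with
    | zero => rw [hP0]; simp [derivative_X_pow, hqE]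
    | succ n ih =>
      rw [hPs, derivative_add, derivative_pow, ih]
      simp [derivative_X_pow, hqE]
  have hPnd : ∀ n, (P n).natDegree = q ^ (n + 1) ∧ P n ≠ 0 := by
    intro n
    induction n with
    | zero =>
      have h1 : (P 0).natDegree = q ^ (0 + 1) := by
        rw [hP0, natDegree_C_mul_X_pow q (B 0) hB0, pow_one]
      refine ⟨h1, fun h => ?_⟩
      rw [h, natDegree_zero] at h1
      exact pow_ne_zero _ hq0 h1.symm
    | succ n ih =>
      have hlc : (P n).leadingCoeff ^ q ≠ 0 :=
        pow_ne_zero _ (leadingCoeff_ne_zero.mpr ih.2)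
      have hpow : (P n ^ q).natDegree = q * (P n).natDegree := natDegree_pow' hlc
      have hq1n : 2 ≤ q ^ (n + 1) := le_trans hq2 (Nat.le_self_pow (by omega) q)
      have h2 : (C (B (n + 1)) * X ^ q).natDegree < (P n ^ q).natDegree := by
        rw [hpow, ih.1]
        calc (C (B (n + 1)) * X ^ q).natDegree ≤ q := natDegree_C_mul_X_pow_le _ _
        _ < q * q ^ (n + 1) := by nlinarith
      have h1 : (P (n + 1)).natDegree = q ^ (n + 1 + 1) := by
        rw [hPs, natDegree_add_eq_left_of_natDegree_lt h2, hpow, ih.1, ← pow_succ']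
      refine ⟨h1, fun h => ?_⟩
      rw [h, natDegree_zero] at h1
      exact pow_ne_zero _ hq0 h1.symm
  have hPeval0 : ∀ n, (P n).eval 0 = 0 := by
    intro n
    induction n with
    | zero => simp [hP0, zero_pow hq0]
    | succ n ih => simp [hPs, ih, zero_pow hq0]
  obtain ⟨t, ht0, htroot⟩ := auxFrob.exists_ne_zero_fixed_root (P r0) (hPder r0) (hPeval0 r0)
    (by rw [(hPnd r0).1]; exact le_trans hq2 (Nat.le_self_pow (by omega) q))
  set y : ℕ → E := fun j => (P j).eval t with hydef
  have hy0 : y 0 = B 0 * t ^ q := by simp [hydef, hP0]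
  have hys : ∀ j, y (j + 1) = y j ^ q + B (j + 1) * t ^ q := by
    intro j
    simp [hydef, hPs]
  have hyt : y r0 = t := htroot
  set x : D := ∑ j ∈ Finset.range (r0 + 1), y j • u j with hxdef
  have hfx : f x = x := by
    rw [hxdef, auxFrob.f_sum f hadd hsmul]
    rw [Finset.sum_congr rfl (fun j _ => by rw [hu] : ∀ j ∈ Finset.range (r0+1), (y j) ^ q • f (u j) = (y j) ^ q • u (j + 1))]
    rw [Finset.sum_range_succ, hyt, ← hB, Finset.smul_sum]
    conv_rhs => rw [Finset.sum_range_succ']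
    rw [Finset.sum_congr rfl (fun j _ => by rw [hys, add_smul, mul_comm (B (j+1)) (t ^ q)] :
      ∀ j ∈ Finset.range r0, y (j+1) • u (j+1) = y j ^ q • u (j+1) + (t ^ q * B (j+1)) • u (j+1))]
    rw [Finset.sum_add_distrib, hy0, Finset.sum_range_succ']
    simp only [smul_smul]
    rw [mul_comm (B 0) (t ^ q)]
    abel
  have hxne : x ≠ 0 := by
    intro h
    apply ht0
    rw [← hyt]
    exact hliN y (by rw [← hxdef]; exact h) r0 (by omega)
  exact ⟨x, hxne, hfx⟩


lemma auxFrob.span_fixed_top [IsSepClosed E] [FiniteDimensional E D]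
    (hqE : (q : E) = 0) (hq2 : 2 ≤ q)
    (f : D → D) (hadd : ∀ x y : D, f (x + y) = f x + f y)
    (hsmul : ∀ (a : E) (x : D), f (a • x) = a ^ q • f x)
    (hetale : Submodule.span E (Set.range f) = ⊤) :
    Submodule.span E {v : D | f v = v} = ⊤ := by
  classical
  by_contra hne
  set Vs : Submodule E D := Submodule.span E {v : D | f v = v} with hVs
  have fstab : ∀ y ∈ Vs, f y ∈ Vs := by
    intro y hy
    refine Submodule.span_induction ?_ ?_ ?_ ?_ hy
    · intro x hx
      rw [Set.mem_setOf_eq] at hx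
      rw [hx]
      exact Submodule.subset_span hx
    · rw [auxFrob.f_zero f hadd]
      exact Submodule.zero_mem _
    · intro x y _ _ ihx ihy
      rw [hadd]
      exact Submodule.add_mem _ ihx ihy
    · intro a x _ ih
      rw [hsmul]
      exact Submodule.smul_mem _ _ ih
  set π : D →ₗ[E] D ⧸ Vs := Vs.mkQ with hπdef
  have hsurj : Function.Surjective π := Vs.mkQ_surjective
  set sec : D ⧸ Vs → D := Function.surjInv hsurj with hsec
  have hsecap : ∀ yq, π (sec yq) = yq := fun yq => Function.surjInv_eq hsurj yq
  set fb : D ⧸ Vs → D ⧸ Vs := fun yq => π (f (sec yq)) with hfb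
  have hcomm : ∀ d : D, fb (π d) = π (f d) := by
    intro d
    have h2 : sec (π d) - d ∈ Vs := by
      rw [← Submodule.Quotient.eq]
      exact hsecap (π d)
    have h3 : f (sec (π d)) - f d ∈ Vs := by
      rw [← auxFrob.f_sub f hadd]
      exact fstab _ h2
    show Submodule.Quotient.mk (f (sec (π d))) = Submodule.Quotient.mk (f d)
    rw [Submodule.Quotient.eq]
    exact h3
  have fbadd : ∀ xq yq, fb (xq + yq) = fb xq + fb yq := by
    intro xq yq
    obtain ⟨a, rfl⟩ := hsurj xq
    obtain ⟨b, rfl⟩ := hsurj yq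
    rw [← map_add, hcomm, hcomm, hcomm, hadd, map_add]
  have fbsmul : ∀ (a : E) (xq : D ⧸ Vs), fb (a • xq) = a ^ q • fb xq := by
    intro a xq
    obtain ⟨d, rfl⟩ := hsurj xq
    rw [← map_smul, hcomm, hcomm, hsmul, map_smul]
  have fbetale : Submodule.span E (Set.range fb) = ⊤ := by
    rw [eq_top_iff]
    rintro yq -
    obtain ⟨d, rfl⟩ := hsurj yq
    have hd : d ∈ Submodule.span E (Set.range f) := by rw [hetale]; trivial
    have h1 : π d ∈ Submodule.map π (Submodule.span E (Set.range f)) :=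
      Submodule.mem_map_of_mem hd
    rw [Submodule.map_span] at h1
    refine Submodule.span_le.mpr ?_ h1
    rintro _ ⟨_, ⟨z, rfl⟩, rfl⟩
    exact Submodule.subset_span ⟨π z, hcomm z⟩
  haveI : Nontrivial (D ⧸ Vs) :=
    Submodule.Quotient.nontrivial_iff.mpr hne
  obtain ⟨xq, hxq0, hxqfix⟩ := auxFrob.exists_fixed hqE hq2 fb fbadd fbsmul fbetale
  obtain ⟨d, rfl⟩ := hsurj xq
  have hfd : f d - d ∈ Vs := by
    rw [hcomm] at hxqfix
    rw [← Submodule.Quotient.eq]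
    exact hxqfix
  obtain ⟨cf, hsupp, hsum⟩ := Submodule.mem_span_set.mp hfd
  have hAS : ∀ a : E, ∃ b : E, b ^ q - b = a := auxFrob.artin_schreier hqE hq2
  choose φ hφ using hAS
  set uu : D := ∑ z ∈ cf.support, φ (cf z) • z with huu
  have hfix_supp : ∀ z ∈ cf.support, f z = z := fun z hz => hsupp hz
  have hfu : f uu - uu = f d - d := by
    rw [huu, auxFrob.f_sum f hadd hsmul]
    rw [Finset.sum_congr rfl (fun z hz => by rw [hfix_supp z hz] :
      ∀ z ∈ cf.support, (φ (cf z)) ^ q • f z = (φ (cf z)) ^ q • z)]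
    rw [← Finset.sum_sub_distrib]
    have h1 : ∀ z ∈ cf.support, (φ (cf z)) ^ q • z - φ (cf z) • z = cf z • z := by
      intro z _
      rw [← sub_smul, hφ]
    rw [Finset.sum_congr rfl h1]
    rw [← hsum]
    rfl
  have hz : f (d - uu) = d - uu := by
    rw [auxFrob.f_sub f hadd]
    rw [sub_eq_sub_iff_sub_eq_sub]
    exact hfu.symm
  have hzVs : d - uu ∈ Vs := Submodule.subset_span hz
  have huuVs : uu ∈ Vs := by
    rw [huu]
    exact Submodule.sum_mem _ fun z hz =>
      Submodule.smul_mem _ _ (Submodule.subset_span (hfix_supp z hz))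
  have hdVs : d ∈ Vs := by
    have := Submodule.add_mem _ hzVs huuVs
    rwa [sub_add_cancel] at this
  apply hxq0
  rw [Submodule.mkQ_apply, Submodule.Quotient.mk_eq_zero]
  exact hdVs


end AuxFrobLemmas


variable {E : Type*} [Field E] {q : ℕ}
  {k : Type*} [Field k] [Algebra k E]
  {D : Type*} [AddCommGroup D] [Module k D] [Module E D] [IsScalarTower k E D]

/-- The `k`-subspace of fixed points of a `q`-Frobenius-semilinear map `f` on an
`E`-vector space `D`, where `k` is the subfield `{a : E | a^q = a}` of `E`. -/
def frobeniusFixedSubmodule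
    (hk : ∀ a : E, a ∈ Set.range (algebraMap k E) ↔ a ^ q = a)
    (f : D → D) (hadd : ∀ x y : D, f (x + y) = f x + f y)
    (hsmul : ∀ (a : E) (x : D), f (a • x) = a ^ q • f x) : Submodule k D where
  carrier := {v | f v = v}
  add_mem' := fun {a b} ha hb => by
    show f (a + b) = a + b
    rw [hadd, ha, hb]
  zero_mem' := by
    show f 0 = 0
    have h := hadd 0 0
    rw [add_zero] at h
    exact (left_eq_add.mp h)
  smul_mem' := fun c v hv => by
    show f (c • v) = c • v
    have hc : algebraMap k E c ^ q = algebraMap k E c := (hk _).mp ⟨c, rfl⟩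
    rw [← algebraMap_smul E c v, hsmul, hc, hv]

/-- Over a separably closed field `E` of characteristic `p`, with `q = p^m` and
`k = {a : E | a^q = a}`, an étale `q`-Frobenius-semilinear map `f` on a
finite-dimensional `E`-vector space `D` has fixed points `D^{f=1}` of `k`-dimension
`dim_E D`, and the natural map `E ⊗[k] D^{f=1} → D` is bijective. -/
theorem stmt_11 (p : ℕ) (hp : p.Prime) [CharP E p] [IsSepClosed E]
    (m : ℕ) (hm : 1 ≤ m) (hq : q = p ^ m)
    (hk : ∀ a : E, a ∈ Set.range (algebraMap k E) ↔ a ^ q = a)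
    [FiniteDimensional E D]
    (f : D → D) (hadd : ∀ x y : D, f (x + y) = f x + f y)
    (hsmul : ∀ (a : E) (x : D), f (a • x) = a ^ q • f x)
    (hetale : Submodule.span E (Set.range f) = ⊤) :
    Module.finrank k (frobeniusFixedSubmodule hk f hadd hsmul) = Module.finrank E D ∧
    Function.Bijective
      (LinearMap.liftBaseChange E (frobeniusFixedSubmodule hk f hadd hsmul).subtype :
        E ⊗[k] (frobeniusFixedSubmodule hk f hadd hsmul) →ₗ[E] D) := by
  classical
  have hq2 : 2 ≤ q := by
    rw [hq]
    calc 2 ≤ p := hp.two_le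
    _ ≤ p ^ m := Nat.le_self_pow (by omega) p
  have hqE : (q : E) = 0 := by
    rw [hq]
    push_cast
    rw [CharP.cast_eq_zero E p]
    exact zero_pow (by omega)
  have hspan := auxFrob.span_fixed_top hqE hq2 f hadd hsmul hetale
  obtain ⟨B, hBsub, hBspan, hBli⟩ := exists_linearIndependent E {v : D | f v = v}
  rw [hspan] at hBspan
  haveI : Fintype B := (hBli.setFinite).fintype
  set bD : Module.Basis B E D := Module.Basis.mk hBli (by rw [Subtype.range_coe, hBspan]) with hbD
  have hbDa : ∀ i : B, bD i = (i : D) := fun i => Module.Basis.mk_apply _ _ _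
  have hfixB : ∀ i : B, f (bD i) = bD i := by
    intro i
    rw [hbDa]
    exact hBsub i.2
  -- every fixed vector is a k-combination of B
  have hfix_spank : ∀ v : D, f v = v → v ∈ Submodule.span k B := by
    intro v hv
    have h2 : f v = ∑ i, (bD.repr v i) ^ q • bD i := by
      conv_lhs => rw [← bD.sum_repr v]
      rw [auxFrob.f_sum f hadd hsmul]
      exact Finset.sum_congr rfl fun i _ => by rw [hfixB]
    have h3 : ∀ i, (bD.repr v i) ^ q = bD.repr v i := by
      have h4 : ∑ i, ((bD.repr v i) ^ q - bD.repr v i) • bD i = 0 := by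
        simp only [sub_smul]
        rw [Finset.sum_sub_distrib, ← h2, bD.sum_repr v, hv, sub_self]
      intro i
      have := Fintype.linearIndependent_iff.mp bD.linearIndependent
        (fun i => (bD.repr v i) ^ q - bD.repr v i) h4 i
      linear_combination this
    have h5 : ∀ i : B, ∃ a : k, algebraMap k E a = bD.repr v i := fun i => (hk _).mpr (h3 i)
    rw [← bD.sum_repr v]
    refine Submodule.sum_mem _ fun i _ => ?_
    obtain ⟨a, ha⟩ := h5 i
    rw [← ha, algebraMap_smul]
    exact Submodule.smul_mem _ _ (Submodule.subset_span (by rw [hbDa]; exact i.2))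
  set V : Submodule k D := frobeniusFixedSubmodule hk f hadd hsmul with hV
  have hmemV : ∀ v : D, v ∈ V ↔ f v = v := fun v => Iff.rfl
  have hVeq : V = Submodule.span k B := by
    refine le_antisymm (fun v hv => hfix_spank v ((hmemV v).mp hv)) ?_
    exact Submodule.span_le.mpr fun b hb => (hmemV b).mpr (hBsub hb)
  set bV' : B → V := fun i => ⟨(i : D), (hmemV _).mpr (hBsub i.2)⟩ with hbV'
  have likD : LinearIndependent k (fun i : B => (i : D)) := by
    refine hBli.restrict_scalars ?_
    intro a b hab
    have h1 : algebraMap k E a = algebraMap k E b := by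
      rw [Algebra.algebraMap_eq_smul_one, Algebra.algebraMap_eq_smul_one]
      exact hab
    exact (algebraMap k E).injective h1
  have liV : LinearIndependent k bV' := by
    refine LinearIndependent.of_comp V.subtype ?_
    exact likD
  have spanV : Submodule.span k (Set.range bV') = ⊤ := by
    apply Submodule.map_injective_of_injective V.injective_subtype
    rw [Submodule.map_span, Submodule.map_subtype_top, ← Set.range_comp]
    have : (V.subtype ∘ bV') = fun i : B => (i : D) := rfl
    rw [this, Subtype.range_coe, ← hVeq]
  set bV : Module.Basis B k V := Module.Basis.mk liV (by rw [spanV]) with hbV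
  haveI : FiniteDimensional k V := Module.Finite.of_basis bV
  have rank1 : Module.finrank k V = Fintype.card B := Module.finrank_eq_card_basis bV
  have rank2 : Module.finrank E D = Fintype.card B := Module.finrank_eq_card_basis bD
  have hsurj : Function.Surjective
      (LinearMap.liftBaseChange E V.subtype : E ⊗[k] V →ₗ[E] D) := by
    rw [← LinearMap.range_eq_top, eq_top_iff, ← hBspan]
    refine Submodule.span_le.mpr fun b hb => ?_
    exact ⟨(1 : E) ⊗ₜ[k] (⟨b, (hmemV b).mpr (hBsub hb)⟩ : V), by
      simp [LinearMap.liftBaseChange_tmul]⟩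
  have hfr : Module.finrank E (E ⊗[k] V) = Module.finrank E D := by
    rw [Module.finrank_baseChange, rank1, rank2]
  have hinj : Function.Injective
      (LinearMap.liftBaseChange E V.subtype : E ⊗[k] V →ₗ[E] D) :=
    (LinearMap.injective_iff_surjective_of_finrank_eq_finrank hfr).mpr hsurj
  exact ⟨rank1.trans rank2.symm, hinj, hsurj⟩
end
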